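/- arXiv:1910.14008 — 7 statements merged into one kernel-verified Lean document; each statement's English description precedes it below -/
import Mathlib

section
/- For every committee-selection instance with monotone preferences (any number n ≥ 1 of voters and any finite set of candidates with arbitrary positive weights) and every weight limit K > 0, there exists a 32-approximately stable committee of weight at most K; that is, a committee S with w(S) ≤ K such that for every nonempty committee S', V(S,S') < 32·(w(S')/K)·n. -/
attribute [local instance] Classical.propDecidable

open Finset

section Stmt0Aux

set_option linter.unusedSectionVars false
set_option maxHeartbeats 2000000
variable {C N : Type} [Fintype C] [Fintype N] [DecidableEq C]

/-- total weight of a committee -/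
def wt (s : C → ℝ) (S : Finset C) : ℝ := ∑ i ∈ S, s i

lemma wt_nonneg (s : C → ℝ) (hs : ∀ i, 0 < s i) (S : Finset C) : 0 ≤ wt s S :=
  Finset.sum_nonneg fun i _ => (hs i).le

lemma wt_pos (s : C → ℝ) (hs : ∀ i, 0 < s i) {S : Finset C} (hS : S.Nonempty) : 0 < wt s S :=
  Finset.sum_pos (fun i _ => hs i) hS

lemma wt_mono (s : C → ℝ) (hs : ∀ i, 0 < s i) {S S' : Finset C} (h : S ⊆ S') :
    wt s S ≤ wt s S' :=
  Finset.sum_le_sum_of_subset_of_nonneg h (fun i _ _ => (hs i).le)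

lemma wt_union_le (s : C → ℝ) (hs : ∀ i, 0 < s i) (S T : Finset C) :
    wt s (S ∪ T) ≤ wt s S + wt s T := by
  classical
  calc wt s (S ∪ T) ≤ wt s S + wt s (T \ S) := by
        rw [wt, wt, wt, ← Finset.sum_union (Finset.disjoint_sdiff)]
        exact le_of_eq (by rw [Finset.union_sdiff_self_eq_union])
    _ ≤ wt s S + wt s T := by
        have := wt_mono s hs (Finset.sdiff_subset : T \ S ⊆ T)
        linarith

/-- strict preference -/
def SP (pref : N → Finset C → Finset C → Prop) (v : N) (T S : Finset C) : Prop :=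
  pref v T S ∧ ¬ pref v S T

/-- number of voters in `W` strictly preferring `T` to `S` -/
noncomputable def cnt (pref : N → Finset C → Finset C → Prop) (W : Finset N) (S T : Finset C) : ℕ :=
  (W.filter fun v => SP pref v T S).card

variable {pref : N → Finset C → Finset C → Prop}

lemma SP_of_SP_of_weak (htrans : ∀ v S₁ S₂ S₃, pref v S₁ S₂ → pref v S₂ S₃ → pref v S₁ S₃)
    {v : N} {T S R : Finset C} (h1 : SP pref v T S) (h2 : pref v S R) : SP pref v T R := by
  refine ⟨htrans v T S R h1.1 h2, fun hc => h1.2 (htrans v S R T h2 hc)⟩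

lemma exists_pref_max (htotal : ∀ v S S', pref v S S' ∨ pref v S' S)
    (htrans : ∀ v S₁ S₂ S₃, pref v S₁ S₂ → pref v S₂ S₃ → pref v S₁ S₃)
    (v : N) (G : Finset (Finset C)) (hG : G.Nonempty) :
    ∃ T ∈ G, ∀ T' ∈ G, pref v T T' := by
  classical
  induction G using Finset.induction_on with
  | empty => exact absurd hG (by simp)
  | @insert a G' ha ih =>
    rcases G'.eq_empty_or_nonempty with h | h
    · subst h
      refine ⟨a, by simp, ?_⟩
      intro T' hT'
      simp only [Finset.mem_insert, Finset.mem_singleton] at hT'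
      rcases hT' with rfl | h; · rcases htotal v T' T' with h | h <;> exact h
      · simp at h
    · obtain ⟨b, hb, hbmax⟩ := ih h
      rcases htotal v a b with hab | hba
      · refine ⟨a, Finset.mem_insert_self _ _, ?_⟩
        intro T' hT'
        rcases Finset.mem_insert.1 hT' with rfl | hT'
        · rcases htotal v T' T' with h | h <;> exact h
        · exact htrans v a b T' hab (hbmax T' hT')
      · refine ⟨b, Finset.mem_insert_of_mem hb, ?_⟩
        intro T' hT'
        rcases Finset.mem_insert.1 hT' with rfl | hT'
        · exact hba
        · exact hbmax T' hT'

lemma pow_add_ineq (k : ℕ) (b c : ℝ) (hb : 0 ≤ b) (hc : 0 ≤ c) :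
    b ^ (k + 1) + (k + 1 : ℝ) * c * b ^ k ≤ (b + c) ^ (k + 1) := by
  induction k with
  | zero => simp
  | succ k ih =>
    have hbk : (0:ℝ) ≤ b ^ k := pow_nonneg hb k
    have hbk1 : (0:ℝ) ≤ b ^ (k+1) := pow_nonneg hb (k+1)
    have h2 : (b + c) ^ (k + 1 + 1) = (b + c) * (b + c) ^ (k + 1) := by ring
    have h3 : (b + c) * (b ^ (k + 1) + (k + 1 : ℝ) * c * b ^ k) ≤ (b + c) ^ (k + 1 + 1) := by
      rw [h2]
      have hbc : (0:ℝ) ≤ b + c := by linarith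
      exact mul_le_mul_of_nonneg_left ih hbc
    have hk : (0:ℝ) ≤ (k : ℝ) := Nat.cast_nonneg k
    have e1 : b * b ^ k = b ^ (k+1) := (pow_succ b k).symm ▸ by ring
    have e2 : b * b ^ (k+1) = b ^ (k+1+1) := by rw [← pow_succ']
    push_cast
    push_cast at h3
    have expand : (b+c)*(b^(k+1) + ((k:ℝ)+1)*c*b^k)
        = b^(k+1+1) + ((k:ℝ)+1+1)*c*b^(k+1) + ((k:ℝ)+1)*(c^2)*b^k := by
      rw [← e1, ← e2]; ring
    rw [expand] at h3
    nlinarith [mul_nonneg (mul_nonneg (by linarith : (0:ℝ) ≤ (k:ℝ)+1) (mul_nonneg hc hc)) hbk]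


lemma wt_biUnion_le {ι : Type*} [DecidableEq ι] (s : C → ℝ) (hs : ∀ i, 0 < s i)
    (t : ι → Finset C) (I : Finset ι) :
    wt s (I.biUnion t) ≤ ∑ i ∈ I, wt s (t i) := by
  classical
  induction I using Finset.induction_on with
  | empty => simp [wt]
  | @insert a I' ha ih =>
    rw [Finset.biUnion_insert, Finset.sum_insert ha]
    calc wt s (t a ∪ I'.biUnion t) ≤ wt s (t a) + wt s (I'.biUnion t) := wt_union_le s hs _ _
      _ ≤ wt s (t a) + ∑ i ∈ I', wt s (t i) := by linarith

lemma power_bound (htotal : ∀ v S S', pref v S S' ∨ pref v S' S)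
    (htrans : ∀ v S₁ S₂ S₃, pref v S₁ S₂ → pref v S₂ S₃ → pref v S₁ S₃)
    (v : N) (k : ℕ) (G : Finset (Finset C)) (lam : Finset C → ℝ)
    (h0 : ∀ T ∈ G, 0 ≤ lam T) :
    ((k:ℝ)+1) * ∑ T ∈ G, lam T * (∑ T' ∈ G.filter (fun T' => SP pref v T T'), lam T')^k
      ≤ (∑ T ∈ G, lam T)^(k+1) := by
  classical
  induction G using Finset.strongInduction with
  | _ G ih =>
    rcases G.eq_empty_or_nonempty with rfl | hG
    · simp
    · obtain ⟨Tm, hTmG, hmax⟩ := exists_pref_max htotal htrans v G hG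
      set G' := G.erase Tm with hG'
      have hins : G = insert Tm G' := by rw [hG', Finset.insert_erase hTmG]
      have hTmnotin : Tm ∉ G' := Finset.notMem_erase _ _
      have h0' : ∀ T ∈ G', 0 ≤ lam T := fun T hT => h0 T (Finset.mem_of_mem_erase hT)
      have ihG' := ih G' (Finset.erase_ssubset hTmG) h0'
      have hM'0 : 0 ≤ ∑ T ∈ G', lam T := Finset.sum_nonneg h0'
      have hlamTm : 0 ≤ lam Tm := h0 Tm hTmG
      have hfilter : ∀ T ∈ G', G.filter (fun T' => SP pref v T T') = G'.filter (fun T' => SP pref v T T') := by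
        intro T hT
        rw [hins, Finset.filter_insert, if_neg]
        intro hSP
        exact hSP.2 (hmax T (Finset.mem_of_mem_erase hT))
      have hrho_sub : G.filter (fun T' => SP pref v Tm T') ⊆ G' := by
        intro R hR
        rw [Finset.mem_filter] at hR
        refine Finset.mem_erase.2 ⟨?_, hR.1⟩
        rintro rfl
        exact hR.2.2 hR.2.1
      have hrho_le : (∑ T' ∈ G.filter (fun T' => SP pref v Tm T'), lam T') ≤ ∑ T ∈ G', lam T :=
        Finset.sum_le_sum_of_subset_of_nonneg hrho_sub (fun i hi _ => h0' i hi)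
      have hrho0 : 0 ≤ ∑ T' ∈ G.filter (fun T' => SP pref v Tm T'), lam T' :=
        Finset.sum_nonneg (fun i hi => h0 i (Finset.mem_filter.1 hi).1)
      have hsplit : (∑ T ∈ G, lam T * (∑ T' ∈ G.filter (fun T' => SP pref v T T'), lam T')^k)
          = lam Tm * (∑ T' ∈ G.filter (fun T' => SP pref v Tm T'), lam T')^k
            + ∑ T ∈ G', lam T * (∑ T' ∈ G'.filter (fun T' => SP pref v T T'), lam T')^k := by
        rw [hins, Finset.sum_insert hTmnotin, ← hins]
        congr 1
        exact Finset.sum_congr rfl (fun T hT => by rw [hfilter T hT])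
      have hsumsplit : (∑ T ∈ G, lam T) = (∑ T ∈ G', lam T) + lam Tm := by
        rw [hins, Finset.sum_insert hTmnotin]; ring
      have hpowle : (∑ T' ∈ G.filter (fun T' => SP pref v Tm T'), lam T')^k ≤ (∑ T ∈ G', lam T)^k :=
        pow_le_pow_left₀ hrho0 hrho_le k
      have key := pow_add_ineq k (∑ T ∈ G', lam T) (lam Tm) hM'0 hlamTm
      rw [hsplit, hsumsplit]
      have hk1 : (0:ℝ) ≤ (k:ℝ)+1 := by positivity
      calc ((k:ℝ)+1) * (lam Tm * (∑ T' ∈ G.filter (fun T' => SP pref v Tm T'), lam T')^k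
            + ∑ T ∈ G', lam T * (∑ T' ∈ G'.filter (fun T' => SP pref v T T'), lam T')^k)
          ≤ ((k:ℝ)+1) * lam Tm * (∑ T ∈ G', lam T)^k
            + ((k:ℝ)+1) * ∑ T ∈ G', lam T * (∑ T' ∈ G'.filter (fun T' => SP pref v T T'), lam T')^k := by
            have := mul_le_mul_of_nonneg_left hpowle (mul_nonneg hk1 hlamTm)
            nlinarith [this]
        _ ≤ ((k:ℝ)+1) * lam Tm * (∑ T ∈ G', lam T)^k + (∑ T ∈ G', lam T)^(k+1) := by linarith [ihG']
        _ ≤ ((∑ T ∈ G', lam T) + lam Tm)^(k+1) := by linarith [key]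

lemma quantile_bound (htotal : ∀ v S S', pref v S S' ∨ pref v S' S)
    (htrans : ∀ v S₁ S₂ S₃, pref v S₁ S₂ → pref v S₂ S₃ → pref v S₁ S₃)
    (v : N) (F : Finset (Finset C)) (x : Finset C → ℝ) (hx0 : ∀ R ∈ F, 0 ≤ x R)
    (q : ℝ) (hq : 0 ≤ q) :
    (∑ R ∈ F.filter (fun R => (∑ R' ∈ F.filter (fun R' => pref v R R'), x R') < q), x R) ≤ q := by
  classical
  set A := F.filter (fun R => (∑ R' ∈ F.filter (fun R' => pref v R R'), x R') < q) with hA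
  rcases A.eq_empty_or_nonempty with hAe | hAne
  · rw [hAe]; simpa using hq
  · obtain ⟨am, ham, hammax⟩ := exists_pref_max htotal htrans v A hAne
    have ham' := Finset.mem_filter.1 ham
    have hsub : A ⊆ F.filter (fun R' => pref v am R') := by
      intro R hR
      exact Finset.mem_filter.2 ⟨(Finset.mem_filter.1 hR).1, hammax R hR⟩
    calc (∑ R ∈ A, x R) ≤ ∑ R' ∈ F.filter (fun R' => pref v am R'), x R' :=
          Finset.sum_le_sum_of_subset_of_nonneg hsub (fun i hi _ => hx0 i (Finset.mem_filter.1 hi).1)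
      _ ≤ q := ham'.2.le

lemma tuple_sum_one (k : ℕ) (G : Finset (Finset C)) (lam : Finset C → ℝ)
    (hlam1 : ∑ T ∈ G, lam T = 1) :
    ∑ t ∈ Fintype.piFinset (fun _ : Fin k => G), ∏ i, lam (t i) = 1 := by
  rw [Finset.sum_prod_piFinset]
  simp [hlam1]

lemma tuple_expect_coord (k : ℕ) (G : Finset (Finset C)) (lam : Finset C → ℝ)
    (hlam1 : ∑ T ∈ G, lam T = 1) (i : Fin k) (h : Finset C → ℝ) :
    ∑ t ∈ Fintype.piFinset (fun _ : Fin k => G), (∏ j, lam (t j)) * h (t i)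
      = ∑ T ∈ G, lam T * h T := by
  have hpt : ∀ t : Fin k → Finset C, (∏ j, lam (t j)) * h (t i)
      = ∏ j, (lam (t j) * (if j = i then h (t j) else 1)) := by
    intro t
    rw [Finset.prod_mul_distrib, Finset.prod_ite_eq' Finset.univ i (fun j => h (t j)),
      if_pos (Finset.mem_univ i)]
  calc ∑ t ∈ Fintype.piFinset (fun _ : Fin k => G), (∏ j, lam (t j)) * h (t i)
      = ∑ t ∈ Fintype.piFinset (fun _ : Fin k => G), ∏ j, (lam (t j) * (if j = i then h (t j) else 1)) :=
        Finset.sum_congr rfl (fun t _ => hpt t)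
    _ = ∏ j : Fin k, ∑ T ∈ G, lam T * (if j = i then h T else 1) :=
        Finset.sum_prod_piFinset G (fun j T => lam T * (if j = i then h T else 1))
    _ = ∑ T ∈ G, lam T * h T := by
        refine Finset.prod_eq_single_of_mem i (Finset.mem_univ i) ?_ |>.trans (by simp)
        intro j _ hji
        simp only [if_neg hji, mul_one, hlam1]

lemma tuple_expect_coord2 (k : ℕ) (G : Finset (Finset C)) (lam : Finset C → ℝ)
    (hlam1 : ∑ T ∈ G, lam T = 1) (i j : Fin k) (hij : i ≠ j) (h h' : Finset C → ℝ) :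
    ∑ t ∈ Fintype.piFinset (fun _ : Fin k => G), (∏ l, lam (t l)) * (h (t i) * h' (t j))
      = (∑ T ∈ G, lam T * h T) * (∑ T ∈ G, lam T * h' T) := by
  have hprodite : ∀ t : Fin k → Finset C,
      (∏ l, (if l = i then h (t l) else if l = j then h' (t l) else 1)) = h (t i) * h' (t j) := by
    intro t
    rw [← Finset.mul_prod_erase Finset.univ _ (Finset.mem_univ i)]
    have h1 : (if i = i then h (t i) else if i = j then h' (t i) else 1) = h (t i) := if_pos rfl
    rw [h1]
    congr 1
    rw [Finset.prod_eq_single_of_mem j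
      (Finset.mem_erase.2 ⟨fun hc => hij hc.symm, Finset.mem_univ j⟩)]
    · rw [if_neg (fun hc => hij hc.symm), if_pos rfl]
    · intro l hl hlj
      have hli : l ≠ i := (Finset.mem_erase.1 hl).1
      rw [if_neg hli, if_neg hlj]
  have hpt : ∀ t : Fin k → Finset C, (∏ l, lam (t l)) * (h (t i) * h' (t j))
      = ∏ l, (lam (t l) * (if l = i then h (t l) else if l = j then h' (t l) else 1)) := by
    intro t
    rw [Finset.prod_mul_distrib, hprodite t]
  calc ∑ t ∈ Fintype.piFinset (fun _ : Fin k => G), (∏ l, lam (t l)) * (h (t i) * h' (t j))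
      = ∑ t ∈ Fintype.piFinset (fun _ : Fin k => G),
          ∏ l, (lam (t l) * (if l = i then h (t l) else if l = j then h' (t l) else 1)) :=
        Finset.sum_congr rfl (fun t _ => hpt t)
    _ = ∏ l : Fin k, ∑ T ∈ G, lam T * (if l = i then h T else if l = j then h' T else 1) :=
        Finset.sum_prod_piFinset G (fun l T => lam T * (if l = i then h T else if l = j then h' T else 1))
    _ = (∑ T ∈ G, lam T * h T) * (∑ T ∈ G, lam T * h' T) := by
        rw [← Finset.mul_prod_erase Finset.univ _ (Finset.mem_univ i)]
        have h1 : (∑ T ∈ G, lam T * (if i = i then h T else if i = j then h' T else 1))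
            = ∑ T ∈ G, lam T * h T := by simp
        rw [h1]
        congr 1
        rw [Finset.prod_eq_single_of_mem j
          (Finset.mem_erase.2 ⟨fun hc => hij hc.symm, Finset.mem_univ j⟩)]
        · rw [show (∑ T ∈ G, lam T * (if j = i then h T else if j = j then h' T else 1))
              = ∑ T ∈ G, lam T * h' T by
            refine Finset.sum_congr rfl (fun T _ => ?_)
            rw [if_neg (fun hc => hij hc.symm), if_pos rfl]]
        · intro l hl hlj
          have hli : l ≠ i := (Finset.mem_erase.1 hl).1
          simp only [if_neg hli, if_neg hlj, mul_one, hlam1]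

lemma best_response (htotal : ∀ v S S', pref v S S' ∨ pref v S' S)
    (htrans : ∀ v S₁ S₂ S₃, pref v S₁ S₂ → pref v S₂ S₃ → pref v S₁ S₃)
    (hmono : ∀ v (S S' : Finset C), S ⊆ S' → pref v S' S)
    (s : C → ℝ) (hs : ∀ i, 0 < s i)
    (W : Finset N) (KL : ℝ) (hKL : 0 < KL)
    (G : Finset (Finset C)) (hlight : ∀ T ∈ G, 11 * wt s T ≤ KL)
    (hwtpos : ∀ T ∈ G, 0 < wt s T)
    (lam : Finset C → ℝ) (hlam0 : ∀ T ∈ G, 0 ≤ lam T) (hlam1 : ∑ T ∈ G, lam T = 1) :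
    ∃ S : Finset C, wt s S ≤ KL ∧
      132 * (∑ T ∈ G, lam T * (cnt pref W S T : ℝ)) * KL
        ≤ 295 * (∑ T ∈ G, lam T * wt s T) * (W.card : ℝ) := by
  classical
  set μ := ∑ T ∈ G, lam T * wt s T with hμdef
  have hμpos : 0 < μ := by
    obtain ⟨T₀, hT₀G, hT₀⟩ := Finset.exists_ne_zero_of_sum_ne_zero (hlam1 ▸ one_ne_zero)
    refine Finset.sum_pos' (fun T hT => mul_nonneg (hlam0 T hT) (wt_nonneg s hs T)) ⟨T₀, hT₀G, ?_⟩
    exact mul_pos (lt_of_le_of_ne (hlam0 T₀ hT₀G) (Ne.symm hT₀)) (hwtpos T₀ hT₀G)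
  have hμle : 11 * μ ≤ KL := by
    have : ∀ T ∈ G, lam T * wt s T ≤ lam T * (KL / 11) := by
      intro T hT
      exact mul_le_mul_of_nonneg_left (by linarith [hlight T hT]) (hlam0 T hT)
    calc 11 * μ ≤ 11 * ∑ T ∈ G, lam T * (KL / 11) := by
          have := Finset.sum_le_sum this
          linarith
      _ = KL := by rw [← Finset.sum_mul, hlam1]; ring
  set k := ⌊3 / 5 * KL / μ⌋₊ with hkdef
  have hk1 : 1 ≤ k := by
    refine Nat.le_floor ?_
    rw [Nat.cast_one, le_div_iff₀ hμpos]
    linarith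
  have hkle : (k : ℝ) * μ ≤ 3 / 5 * KL := by
    have := Nat.floor_le (by positivity : (0:ℝ) ≤ 3 / 5 * KL / μ)
    rw [← hkdef] at this
    calc (k : ℝ) * μ ≤ (3 / 5 * KL / μ) * μ := by
          exact mul_le_mul_of_nonneg_right this hμpos.le
      _ = 3 / 5 * KL := by field_simp
  have hklt : 3 / 5 * KL < ((k : ℝ) + 1) * μ := by
    have := Nat.lt_floor_add_one (3 / 5 * KL / μ)
    rw [← hkdef] at this
    calc 3 / 5 * KL = (3 / 5 * KL / μ) * μ := by field_simp
      _ < ((k : ℝ) + 1) * μ := by exact mul_lt_mul_of_pos_right this hμpos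
  -- tuple space
  set D := Fintype.piFinset (fun _ : Fin k => G) with hDdef
  set P : (Fin k → Finset C) → ℝ := fun t => ∏ i, lam (t i) with hPdef
  set X : (Fin k → Finset C) → ℝ := fun t => ∑ i, wt s (t i) with hXdef
  set U : (Fin k → Finset C) → Finset C := fun t => Finset.univ.biUnion t with hUdef
  have hP0 : ∀ t ∈ D, 0 ≤ P t := by
    intro t ht
    exact Finset.prod_nonneg fun i _ => hlam0 (t i) (Fintype.mem_piFinset.1 ht i)
  have hE1 : ∑ t ∈ D, P t = 1 := tuple_sum_one k G lam hlam1
  have hEX : ∑ t ∈ D, P t * X t = (k : ℝ) * μ := by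
    calc ∑ t ∈ D, P t * X t = ∑ t ∈ D, ∑ i : Fin k, P t * wt s (t i) := by
          refine Finset.sum_congr rfl fun t _ => ?_
          rw [hXdef, Finset.mul_sum]
      _ = ∑ i : Fin k, ∑ t ∈ D, P t * wt s (t i) := Finset.sum_comm
      _ = ∑ i : Fin k, μ := Finset.sum_congr rfl fun i _ => tuple_expect_coord k G lam hlam1 i (wt s)
      _ = (k : ℝ) * μ := by rw [Finset.sum_const, Finset.card_univ, Fintype.card_fin]; simp
  set ν := ∑ T ∈ G, lam T * (wt s T)^2 with hνdef
  have hEX2 : ∑ t ∈ D, P t * (X t)^2 = (k : ℝ) * ν + (k : ℝ) * ((k : ℝ) - 1) * μ^2 := by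
    have hXsq : ∀ t, (X t)^2 = ∑ i : Fin k, ∑ j : Fin k, wt s (t i) * wt s (t j) := by
      intro t
      rw [hXdef, pow_two]
      exact Finset.sum_mul_sum _ _ _ _
    calc ∑ t ∈ D, P t * (X t)^2
        = ∑ t ∈ D, ∑ i : Fin k, ∑ j : Fin k, P t * (wt s (t i) * wt s (t j)) := by
          refine Finset.sum_congr rfl fun t _ => ?_
          rw [hXsq t, Finset.mul_sum]
          refine Finset.sum_congr rfl fun i _ => ?_
          rw [Finset.mul_sum]
      _ = ∑ i : Fin k, ∑ j : Fin k, ∑ t ∈ D, P t * (wt s (t i) * wt s (t j)) := by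
          rw [Finset.sum_comm]
          refine Finset.sum_congr rfl fun i _ => Finset.sum_comm
      _ = ∑ i : Fin k, ∑ j : Fin k, (if i = j then ν else μ^2) := by
          refine Finset.sum_congr rfl fun i _ => Finset.sum_congr rfl fun j _ => ?_
          by_cases hij : i = j
          · subst hij
            rw [if_pos rfl]
            have : ∀ t : Fin k → Finset C, P t * (wt s (t i) * wt s (t i)) = P t * (wt s (t i))^2 := by
              intro t; ring
            rw [Finset.sum_congr rfl fun t _ => this t]
            exact tuple_expect_coord k G lam hlam1 i (fun T => (wt s T)^2)
          · rw [if_neg hij]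
            have := tuple_expect_coord2 k G lam hlam1 i j hij (wt s) (wt s)
            rw [this, ← pow_two]
      _ = (k : ℝ) * ν + (k : ℝ) * ((k : ℝ) - 1) * μ^2 := by
          have hrow : ∀ i : Fin k, (∑ j : Fin k, (if i = j then ν else μ^2))
              = ν + ((k : ℝ) - 1) * μ^2 := by
            intro i
            have : ∀ j : Fin k, (if i = j then ν else μ^2)
                = (if i = j then ν - μ^2 else 0) + μ^2 := by
              intro j; by_cases h : i = j <;> simp [h]
            rw [Finset.sum_congr rfl fun j _ => this j, Finset.sum_add_distrib,
              Finset.sum_ite_eq Finset.univ i (fun _ => ν - μ^2), if_pos (Finset.mem_univ i),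
              Finset.sum_const, Finset.card_univ, Fintype.card_fin]
            have hk1' : (1:ℝ) ≤ (k:ℝ) := by exact_mod_cast hk1
            push_cast
            ring
          rw [Finset.sum_congr rfl fun i _ => hrow i, Finset.sum_const, Finset.card_univ,
            Fintype.card_fin]
          push_cast
          ring
  have hνle : ν ≤ KL / 11 * μ := by
    rw [hνdef, hμdef, Finset.mul_sum]
    refine Finset.sum_le_sum fun T hT => ?_
    have h1 := hlight T hT
    have h2 := wt_nonneg s hs T
    have h3 := hlam0 T hT
    nlinarith [mul_nonneg (mul_nonneg h3 h2) (by linarith : (0:ℝ) ≤ KL/11 - wt s T)]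
  set u := 3 / 22 * KL with hudef
  set τ := KL - (k:ℝ) * μ with hτdef
  have hτge : 2 / 5 * KL ≤ τ := by rw [hτdef]; linarith
  have hkνle : (k:ℝ) * ν ≤ 3 / 55 * KL^2 := by
    have h0k : (0:ℝ) ≤ (k:ℝ) := Nat.cast_nonneg k
    have hν0 : 0 ≤ ν := Finset.sum_nonneg fun T hT =>
      mul_nonneg (hlam0 T hT) (sq_nonneg _)
    calc (k:ℝ) * ν ≤ (k:ℝ) * (KL/11 * μ) := mul_le_mul_of_nonneg_left hνle h0k
      _ = KL/11 * ((k:ℝ)*μ) := by ring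
      _ ≤ KL/11 * (3/5*KL) := by nlinarith
      _ = 3/55*KL^2 := by ring
  have hsecond : ∑ t ∈ D, P t * (X t - (k:ℝ)*μ + u)^2 ≤ (k:ℝ)*ν + u^2 := by
    have expand : ∀ t, P t * (X t - (k:ℝ)*μ + u)^2
        = P t * (X t)^2 + (2*(u - (k:ℝ)*μ)) * (P t * X t) + (((k:ℝ)*μ - u)^2) * P t := by
      intro t; ring
    rw [Finset.sum_congr rfl fun t _ => expand t, Finset.sum_add_distrib, Finset.sum_add_distrib,
      ← Finset.mul_sum, ← Finset.mul_sum, hEX2, hEX, hE1]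
    have hkμ2 : 0 ≤ (k:ℝ) * μ^2 := mul_nonneg (Nat.cast_nonneg k) (sq_nonneg μ)
    nlinarith [hkμ2]
  set Bad := D.filter (fun t => ¬ (X t ≤ KL)) with hBadDef
  have hPrBad : ∑ t ∈ Bad, P t ≤ 15 / 59 := by
    have hterm : ∀ t ∈ Bad, P t * (τ + u)^2 ≤ P t * (X t - (k:ℝ)*μ + u)^2 := by
      intro t ht
      obtain ⟨htD, hX⟩ := Finset.mem_filter.1 ht
      push_neg at hX
      have hle : τ + u ≤ X t - (k:ℝ)*μ + u := by rw [hτdef]; linarith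
      have hτu0 : (0:ℝ) ≤ τ + u := by rw [hudef]; nlinarith
      have h2 : (τ+u)^2 ≤ (X t - (k:ℝ)*μ + u)^2 := by nlinarith
      exact mul_le_mul_of_nonneg_left h2 (hP0 t htD)
    have hchain : (∑ t ∈ Bad, P t) * (τ+u)^2 ≤ (k:ℝ)*ν + u^2 := by
      calc (∑ t ∈ Bad, P t) * (τ+u)^2 = ∑ t ∈ Bad, P t * (τ+u)^2 := Finset.sum_mul _ _ _
        _ ≤ ∑ t ∈ Bad, P t * (X t - (k:ℝ)*μ + u)^2 := Finset.sum_le_sum hterm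
        _ ≤ ∑ t ∈ D, P t * (X t - (k:ℝ)*μ + u)^2 :=
            Finset.sum_le_sum_of_subset_of_nonneg (Finset.filter_subset _ _)
              (fun t ht _ => mul_nonneg (hP0 t ht) (sq_nonneg _))
        _ ≤ (k:ℝ)*ν + u^2 := hsecond
    have hPB0 : (0:ℝ) ≤ ∑ t ∈ Bad, P t :=
      Finset.sum_nonneg fun t ht => hP0 t (Finset.mem_filter.1 ht).1
    have hτuKL : 59/110 * KL ≤ τ + u := by rw [hudef]; linarith
    have hA : (∑ t ∈ Bad, P t) * (59/110 * KL)^2 ≤ 177/2420 * KL^2 := by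
      have h59 : (59/110*KL)^2 ≤ (τ+u)^2 := by nlinarith [mul_pos hKL hKL]
      calc (∑ t ∈ Bad, P t) * (59/110 * KL)^2 ≤ (∑ t ∈ Bad, P t) * (τ+u)^2 :=
            mul_le_mul_of_nonneg_left h59 hPB0
        _ ≤ (k:ℝ)*ν + u^2 := hchain
        _ ≤ 177/2420 * KL^2 := by rw [hudef]; nlinarith [hkνle]
    nlinarith [hA, mul_pos hKL hKL]
  set Good := D.filter (fun t => X t ≤ KL) with hGoodDef
  have hsumsplit2 : (∑ t ∈ Good, P t) + (∑ t ∈ Bad, P t) = 1 := by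
    rw [hGoodDef, hBadDef, Finset.sum_filter_add_sum_filter_not, hE1]
  have hPrGood : 44 / 59 ≤ ∑ t ∈ Good, P t := by linarith
  have hGoodne : Good.Nonempty := by
    rcases Good.eq_empty_or_nonempty with h | h
    · exfalso; rw [h, Finset.sum_empty] at hPrGood; linarith
    · exact h
  set Φ : (Fin k → Finset C) → ℝ := fun t => ∑ T ∈ G, lam T * (cnt pref W (U t) T : ℝ) with hΦdef
  have hΦ0 : ∀ t, 0 ≤ Φ t := fun t =>
    Finset.sum_nonneg fun T hT => mul_nonneg (hlam0 T hT) (Nat.cast_nonneg _)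
  have hcnt : ∀ (S : Finset C) (T : Finset C), (cnt pref W S T : ℝ)
      = ∑ v ∈ W, (if SP pref v T S then (1:ℝ) else 0) := by
    intro S T
    rw [cnt, Finset.card_filter]
    push_cast
    rfl
  have hEΦ : ((k:ℝ)+1) * ∑ t ∈ D, P t * Φ t ≤ (W.card : ℝ) := by
    have step1 : ∀ t ∈ D, P t * Φ t
        = ∑ T ∈ G, ∑ v ∈ W, lam T * (P t * (if SP pref v T (U t) then (1:ℝ) else 0)) := by
      intro t _
      rw [hΦdef, Finset.mul_sum]
      refine Finset.sum_congr rfl fun T _ => ?_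
      rw [hcnt (U t) T, Finset.mul_sum, Finset.mul_sum]
      refine Finset.sum_congr rfl fun v _ => by ring
    have step2 : ∑ t ∈ D, P t * Φ t
        = ∑ T ∈ G, ∑ v ∈ W, lam T * ∑ t ∈ D, P t * (if SP pref v T (U t) then (1:ℝ) else 0) := by
      calc ∑ t ∈ D, P t * Φ t
          = ∑ t ∈ D, ∑ T ∈ G, ∑ v ∈ W, lam T * (P t * (if SP pref v T (U t) then (1:ℝ) else 0)) :=
            Finset.sum_congr rfl step1
        _ = ∑ T ∈ G, ∑ t ∈ D, ∑ v ∈ W, lam T * (P t * (if SP pref v T (U t) then (1:ℝ) else 0)) :=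
            Finset.sum_comm
        _ = ∑ T ∈ G, ∑ v ∈ W, ∑ t ∈ D, lam T * (P t * (if SP pref v T (U t) then (1:ℝ) else 0)) :=
            Finset.sum_congr rfl fun T _ => Finset.sum_comm
        _ = ∑ T ∈ G, ∑ v ∈ W, lam T * ∑ t ∈ D, P t * (if SP pref v T (U t) then (1:ℝ) else 0) := by
            refine Finset.sum_congr rfl fun T _ => Finset.sum_congr rfl fun v _ => ?_
            rw [Finset.mul_sum]
    have hpoint : ∀ (T : Finset C), T ∈ G → ∀ v ∈ W,
        ∑ t ∈ D, P t * (if SP pref v T (U t) then (1:ℝ) else 0)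
          ≤ (∑ T' ∈ G.filter (fun T' => SP pref v T T'), lam T')^k := by
      intro T _ v _
      have hb : ∀ t ∈ D, P t * (if SP pref v T (U t) then (1:ℝ) else 0)
          ≤ ∏ i, (lam (t i) * (if SP pref v T (t i) then (1:ℝ) else 0)) := by
        intro t ht
        rw [Finset.prod_mul_distrib]
        by_cases hSP : SP pref v T (U t)
        · rw [if_pos hSP]
          have hall : ∀ i : Fin k, (if SP pref v T (t i) then (1:ℝ) else 0) = 1 := by
            intro i
            rw [if_pos]
            exact SP_of_SP_of_weak htrans hSP
              (hmono v (t i) (U t) (Finset.subset_biUnion_of_mem t (Finset.mem_univ i)))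
          rw [Finset.prod_congr rfl fun i _ => hall i]
          simp [hPdef]
        · rw [if_neg hSP, mul_zero]
          refine mul_nonneg (hP0 t ht) (Finset.prod_nonneg fun i _ => by positivity)
      calc ∑ t ∈ D, P t * (if SP pref v T (U t) then (1:ℝ) else 0)
          ≤ ∑ t ∈ D, ∏ i, (lam (t i) * (if SP pref v T (t i) then (1:ℝ) else 0)) :=
            Finset.sum_le_sum hb
        _ = ∏ _i : Fin k, ∑ T' ∈ G, lam T' * (if SP pref v T T' then (1:ℝ) else 0) :=
            Finset.sum_prod_piFinset G (fun _ T' => lam T' * (if SP pref v T T' then (1:ℝ) else 0))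
        _ = (∑ T' ∈ G.filter (fun T' => SP pref v T T'), lam T')^k := by
            rw [Finset.prod_const, Finset.card_univ, Fintype.card_fin]
            congr 1
            rw [Finset.sum_filter]
            refine Finset.sum_congr rfl fun T' _ => ?_
            by_cases h : SP pref v T T' <;> simp [h]
    have step3 : ∑ t ∈ D, P t * Φ t
        ≤ ∑ v ∈ W, ∑ T ∈ G, lam T * (∑ T' ∈ G.filter (fun T' => SP pref v T T'), lam T')^k := by
      rw [step2, Finset.sum_comm]
      refine Finset.sum_le_sum fun v hv => Finset.sum_le_sum fun T hT => ?_
      exact mul_le_mul_of_nonneg_left (hpoint T hT v hv) (hlam0 T hT)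
    have step4 : ∀ v ∈ W, ((k:ℝ)+1) *
        ∑ T ∈ G, lam T * (∑ T' ∈ G.filter (fun T' => SP pref v T T'), lam T')^k ≤ 1 := by
      intro v _
      have := power_bound htotal htrans v k G lam hlam0
      rw [hlam1, one_pow] at this
      exact this
    have hsum0 : 0 ≤ ∑ t ∈ D, P t * Φ t :=
      Finset.sum_nonneg fun t ht => mul_nonneg (hP0 t ht) (hΦ0 t)
    calc ((k:ℝ)+1) * ∑ t ∈ D, P t * Φ t
        ≤ ((k:ℝ)+1) * ∑ v ∈ W, ∑ T ∈ G, lam T * (∑ T' ∈ G.filter (fun T' => SP pref v T T'), lam T')^k :=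
          mul_le_mul_of_nonneg_left step3 (by positivity)
      _ = ∑ v ∈ W, ((k:ℝ)+1) * ∑ T ∈ G, lam T * (∑ T' ∈ G.filter (fun T' => SP pref v T T'), lam T')^k := by
          rw [Finset.mul_sum]
      _ ≤ ∑ v ∈ W, 1 := Finset.sum_le_sum step4
      _ = (W.card : ℝ) := by simp
  obtain ⟨tstar, htstarG, hmin⟩ := Finset.exists_min_image Good Φ hGoodne
  have htstarD : tstar ∈ D := (Finset.mem_filter.1 htstarG).1
  have hXt : X tstar ≤ KL := (Finset.mem_filter.1 htstarG).2
  refine ⟨U tstar, ?_, ?_⟩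
  · calc wt s (U tstar) ≤ ∑ i : Fin k, wt s (tstar i) := wt_biUnion_le s hs tstar Finset.univ
      _ ≤ KL := hXt
  · have hΦchain : 44/59 * Φ tstar ≤ ∑ t ∈ D, P t * Φ t := by
      calc 44/59 * Φ tstar ≤ (∑ t ∈ Good, P t) * Φ tstar :=
            mul_le_mul_of_nonneg_right hPrGood (hΦ0 _)
        _ = ∑ t ∈ Good, P t * Φ tstar := Finset.sum_mul _ _ _
        _ ≤ ∑ t ∈ Good, P t * Φ t :=
            Finset.sum_le_sum fun t ht =>
              mul_le_mul_of_nonneg_left (hmin t ht) (hP0 t (Finset.mem_filter.1 ht).1)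
        _ ≤ ∑ t ∈ D, P t * Φ t :=
            Finset.sum_le_sum_of_subset_of_nonneg (Finset.filter_subset _ _)
              (fun t ht _ => mul_nonneg (hP0 t ht) (hΦ0 t))
    have h1 : ((k:ℝ)+1) * (44/59 * Φ tstar) ≤ (W.card : ℝ) :=
      le_trans (mul_le_mul_of_nonneg_left hΦchain (by positivity)) hEΦ
    have hq := hΦ0 tstar
    have h2 : (3/5*KL) * (44/59 * Φ tstar) ≤ μ * (W.card : ℝ) := by
      have ha : (3/5*KL) * (44/59 * Φ tstar) ≤ (((k:ℝ)+1) * μ) * (44/59 * Φ tstar) :=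
        mul_le_mul_of_nonneg_right hklt.le (by positivity)
      have hb : (((k:ℝ)+1) * μ) * (44/59 * Φ tstar) = μ * (((k:ℝ)+1) * (44/59 * Φ tstar)) := by ring
      calc (3/5*KL) * (44/59 * Φ tstar) ≤ μ * (((k:ℝ)+1) * (44/59 * Φ tstar)) := by rw [← hb]; exact ha
        _ ≤ μ * (W.card : ℝ) := mul_le_mul_of_nonneg_left h1 hμpos.le
    have : (∑ T ∈ G, lam T * (cnt pref W (U tstar) T : ℝ)) = Φ tstar := rfl
    rw [this]
    nlinarith [h2]

lemma lottery_exists (htotal : ∀ v S S', pref v S S' ∨ pref v S' S)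
    (htrans : ∀ v S₁ S₂ S₃, pref v S₁ S₂ → pref v S₂ S₃ → pref v S₁ S₃)
    (hmono : ∀ v (S S' : Finset C), S ⊆ S' → pref v S' S)
    (s : C → ℝ) (hs : ∀ i, 0 < s i)
    (W : Finset N) (KL : ℝ) (hKL : 0 < KL)
    (G : Finset (Finset C)) (hlight : ∀ T ∈ G, 11 * wt s T ≤ KL)
    (hwtpos : ∀ T ∈ G, 0 < wt s T) :
    ∃ x : Finset C → ℝ, (∀ R, 0 ≤ x R) ∧
      (∑ R ∈ (Finset.univ : Finset (Finset C)).filter (fun R => wt s R ≤ KL), x R = 1) ∧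
      ∀ T ∈ G,
        132 * (∑ R ∈ (Finset.univ : Finset (Finset C)).filter (fun R => wt s R ≤ KL),
          x R * (cnt pref W R T : ℝ)) * KL ≤ 295 * wt s T * (W.card : ℝ) := by
  classical
  set FF := (Finset.univ : Finset (Finset C)).filter (fun R => wt s R ≤ KL) with hFFdef
  have hFFempty : (∅ : Finset C) ∈ FF := by
    rw [hFFdef, Finset.mem_filter]
    refine ⟨Finset.mem_univ _, ?_⟩
    rw [wt, Finset.sum_empty]
    exact hKL.le
  by_contra hcon
  push_neg at hcon
  set A : Finset C → Finset C → ℝ :=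
    fun R T => (cnt pref W R T : ℝ) - 295 * wt s T * (W.card : ℝ) / (132 * KL) with hAdef
  set M : (↥FF → ℝ) →ₗ[ℝ] (↥G → ℝ) :=
    { toFun := fun y T => ∑ R : ↥FF, y R * A (↑R) (↑T),
      map_add' := by
        intro y z
        funext T
        simp [add_mul, Finset.sum_add_distrib]
      map_smul' := by
        intro c y
        funext T
        simp only [Pi.smul_apply, smul_eq_mul, RingHom.id_apply]
        rw [Finset.mul_sum]
        exact Finset.sum_congr rfl fun R _ => by ring } with hMdef
  have hMapp : ∀ (y : ↥FF → ℝ) (T : ↥G), M y T = ∑ R : ↥FF, y R * A (↑R) (↑T) := by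
    intro y T; rfl
  have hMcont : Continuous M := by
    refine continuous_pi fun T => ?_
    have : (fun y : ↥FF → ℝ => M y T) = fun y => ∑ R : ↥FF, y R * A (↑R) (↑T) := by
      funext y; rw [hMapp]
    rw [this]
    exact continuous_finset_sum _ fun R _ => (continuous_apply R).mul continuous_const
  set P : Set (↥G → ℝ) := M '' (stdSimplex ℝ ↥FF) with hPdef
  set Q : Set (↥G → ℝ) := {y | ∀ T, y T ≤ 0} with hQdef
  have hQmem : ∀ y : ↥G → ℝ, y ∈ Q ↔ ∀ T, y T ≤ 0 := by
    intro y; rw [hQdef]; exact Iff.rfl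
  have hPconv : Convex ℝ P := (convex_stdSimplex ℝ ↥FF).linear_image M
  have hPcomp : IsCompact P := (isCompact_stdSimplex ℝ ↥FF).image hMcont
  have hQconv : Convex ℝ Q := by
    intro y hy z hz a b ha hb hab
    rw [hQmem] at *
    intro T
    have h1 : a * y T ≤ 0 := mul_nonpos_of_nonneg_of_nonpos ha (hy T)
    have h2 : b * z T ≤ 0 := mul_nonpos_of_nonneg_of_nonpos hb (hz T)
    simpa using add_nonpos h1 h2
  have hQclosed : IsClosed Q := by
    have : Q = ⋂ T, {y : ↥G → ℝ | y T ≤ 0} := by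
      ext y; rw [hQmem]; simp [Set.mem_iInter]
    rw [this]
    exact isClosed_iInter fun T => isClosed_le (continuous_apply T) continuous_const
  have hdisj : Disjoint P Q := by
    rw [Set.disjoint_left]
    rintro p ⟨y, hy, rfl⟩ hpQ
    set x : Finset C → ℝ := fun R => if h : R ∈ FF then y ⟨R, h⟩ else 0 with hxdef
    have hx0 : ∀ R, 0 ≤ x R := by
      intro R
      simp only [hxdef]
      by_cases h : R ∈ FF
      · rw [dif_pos h]; exact hy.1 _
      · rw [dif_neg h]
    have hxcoe : ∀ R : ↥FF, x ↑R = y R := by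
      intro R
      simp only [hxdef]
      rw [dif_pos R.2]
    have hxsum : ∑ R ∈ FF, x R = 1 := by
      calc ∑ R ∈ FF, x R = ∑ R ∈ FF.attach, x ↑R := (Finset.sum_attach FF x).symm
        _ = ∑ R : ↥FF, y R := by
            rw [← Finset.univ_eq_attach]
            exact Finset.sum_congr rfl fun R _ => hxcoe R
        _ = 1 := hy.2
    obtain ⟨T, hTG, hviol⟩ := hcon x hx0 hxsum
    have hpT : M y ⟨T, hTG⟩ ≤ 0 := (hQmem _).1 hpQ ⟨T, hTG⟩
    have hMyT : M y ⟨T, hTG⟩ = ∑ R ∈ FF, x R * A R T := by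
      rw [hMapp]
      calc ∑ R : ↥FF, y R * A (↑R) T = ∑ R : ↥FF, x ↑R * A (↑R) T :=
            Finset.sum_congr rfl fun R _ => by rw [hxcoe R]
        _ = ∑ R ∈ FF.attach, x ↑R * A (↑R) T := by rw [Finset.univ_eq_attach]
        _ = ∑ R ∈ FF, x R * A R T := Finset.sum_attach FF (fun R => x R * A R T)
    have hAsplit : ∑ R ∈ FF, x R * A R T
        = (∑ R ∈ FF, x R * (cnt pref W R T : ℝ)) - 295 * wt s T * (W.card : ℝ) / (132 * KL) := by
      simp only [hAdef, mul_sub]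
      rw [Finset.sum_sub_distrib, ← Finset.sum_mul, hxsum, one_mul]
    have h132 : (0:ℝ) < 132 * KL := by linarith
    have hlt : 295 * wt s T * (W.card : ℝ) / (132 * KL) < ∑ R ∈ FF, x R * (cnt pref W R T : ℝ) := by
      rw [div_lt_iff₀ h132]
      linarith
    rw [hMyT, hAsplit] at hpT
    linarith
  obtain ⟨f, u, v, hfu, huv, hfv⟩ :=
    geometric_hahn_banach_compact_closed hPconv hPcomp hQconv hQclosed hdisj
  have hv0 : v < 0 := by
    have h0Q : (0 : ↥G → ℝ) ∈ Q := (hQmem _).2 fun T => le_refl 0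
    have := hfv 0 h0Q
    rwa [map_zero] at this
  set e : ↥G → (↥G → ℝ) := fun i j => if i = j then (1:ℝ) else 0 with hedef
  set lamS : ↥G → ℝ := fun i => -(f (e i)) with hlamSdef
  have hlamS0 : ∀ i, 0 ≤ lamS i := by
    intro i
    by_contra hneg
    push_neg at hneg
    simp only [hlamSdef] at hneg
    have hfei : 0 < f (e i) := by linarith
    set c : ℝ := (|v| + 1) / f (e i) with hcdef
    have hc0 : 0 ≤ c := by positivity
    have hbQ : ((-c) • e i) ∈ Q := by
      rw [hQmem]
      intro j
      simp only [Pi.smul_apply, smul_eq_mul, hedef]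
      by_cases h : i = j
      · rw [if_pos h, mul_one]; linarith
      · rw [if_neg h, mul_zero]
    have hv' := hfv _ hbQ
    rw [map_smul, smul_eq_mul] at hv'
    have heq : (-c) * f (e i) = -(|v| + 1) := by
      rw [hcdef]
      field_simp
    rw [heq] at hv'
    have := neg_abs_le v
    linarith
  have hrepr : ∀ p : ↥G → ℝ, f p = ∑ i, p i * f (e i) := by
    intro p
    have hp := pi_eq_sum_univ p
    calc f p = f (∑ i, p i • fun j => if i = j then (1:ℝ) else 0) := by rw [← hp]
      _ = ∑ i, p i * f (e i) := by
          rw [map_sum]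
          refine Finset.sum_congr rfl fun i _ => ?_
          rw [map_smul, smul_eq_mul]
  have hrow : ∀ R ∈ FF, 0 < ∑ i : ↥G, A R ↑i * lamS i := by
    intro R hR
    set δR : ↥FF → ℝ := fun j => if j = ⟨R, hR⟩ then (1:ℝ) else 0 with hδdef
    have hδsimplex : δR ∈ stdSimplex ℝ ↥FF := by
      constructor
      · intro j
        simp only [hδdef]
        by_cases h : j = (⟨R, hR⟩ : ↥FF)
        · rw [if_pos h]; norm_num
        · rw [if_neg h]
      · simp only [hδdef]
        rw [Finset.sum_ite_eq' Finset.univ (⟨R, hR⟩ : ↥FF) (fun _ => (1:ℝ))]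
        rw [if_pos (Finset.mem_univ _)]
    have hMδ : ∀ T : ↥G, M δR T = A R ↑T := by
      intro T
      rw [hMapp]
      simp only [hδdef]
      calc ∑ R' : ↥FF, (if R' = (⟨R, hR⟩ : ↥FF) then (1:ℝ) else 0) * A (↑R') ↑T
          = ∑ R' : ↥FF, (if R' = (⟨R, hR⟩ : ↥FF) then A (↑R') ↑T else 0) := by
            refine Finset.sum_congr rfl fun R' _ => ?_
            by_cases h : R' = (⟨R, hR⟩ : ↥FF)
            · rw [if_pos h, if_pos h, one_mul]
            · rw [if_neg h, if_neg h, zero_mul]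
        _ = A R ↑T := by
            rw [Finset.sum_ite_eq' Finset.univ (⟨R, hR⟩ : ↥FF) (fun R' => A (↑R') ↑T)]
            rw [if_pos (Finset.mem_univ _)]
    have hfMδ : f (M δR) < u := hfu _ ⟨δR, hδsimplex, rfl⟩
    have hexp : f (M δR) = -∑ i : ↥G, A R ↑i * lamS i := by
      rw [hrepr (M δR)]
      calc ∑ i : ↥G, M δR i * f (e i) = ∑ i : ↥G, A R ↑i * f (e i) :=
            Finset.sum_congr rfl fun i _ => by rw [hMδ i]
        _ = -∑ i : ↥G, A R ↑i * lamS i := by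
            rw [← Finset.sum_neg_distrib]
            refine Finset.sum_congr rfl fun i _ => ?_
            simp only [hlamSdef]
            ring
    rw [hexp] at hfMδ
    linarith
  have hmass : 0 < ∑ i : ↥G, lamS i := by
    rcases (Finset.sum_nonneg (fun i (_ : i ∈ Finset.univ) => hlamS0 i)).lt_or_eq with h | h
    · exact h
    · exfalso
      have hzero : ∀ i : ↥G, lamS i = 0 := by
        intro i
        exact Finset.sum_eq_zero_iff_of_nonneg (fun j _ => hlamS0 j) |>.1 h.symm i (Finset.mem_univ i)
      have h2 := hrow ∅ hFFempty
      rw [Finset.sum_congr rfl fun i (_ : i ∈ Finset.univ) => by rw [hzero i, mul_zero]] at h2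
      simp at h2
  set lam : Finset C → ℝ := fun T =>
    if h : T ∈ G then lamS ⟨T, h⟩ / (∑ i : ↥G, lamS i) else 0 with hlamdef
  have hlamcoe : ∀ T : ↥G, lam ↑T = lamS T / (∑ i : ↥G, lamS i) := by
    intro T
    simp only [hlamdef]
    rw [dif_pos T.2]
  have hlam0 : ∀ T ∈ G, 0 ≤ lam T := by
    intro T hT
    have : lam T = lamS ⟨T, hT⟩ / (∑ i : ↥G, lamS i) := hlamcoe ⟨T, hT⟩
    rw [this]
    exact div_nonneg (hlamS0 _) hmass.le
  have hlam1 : ∑ T ∈ G, lam T = 1 := by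
    calc ∑ T ∈ G, lam T = ∑ T ∈ G.attach, lam ↑T := (Finset.sum_attach G lam).symm
      _ = ∑ T : ↥G, lamS T / (∑ i : ↥G, lamS i) := by
          rw [← Finset.univ_eq_attach]
          exact Finset.sum_congr rfl fun T _ => hlamcoe T
      _ = 1 := by
          rw [← Finset.sum_div]
          exact div_self (ne_of_gt hmass)
  obtain ⟨S, hSwt, hSineq⟩ :=
    best_response htotal htrans hmono s hs W KL hKL G hlight hwtpos lam hlam0 hlam1
  have hSFF : S ∈ FF := by
    rw [hFFdef, Finset.mem_filter]
    exact ⟨Finset.mem_univ _, hSwt⟩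
  have hrowS := hrow S hSFF
  have htrans1 : ∑ T ∈ G, lam T * A S T = (∑ i : ↥G, A S ↑i * lamS i) / (∑ i : ↥G, lamS i) := by
    calc ∑ T ∈ G, lam T * A S T = ∑ T ∈ G.attach, lam ↑T * A S ↑T :=
          (Finset.sum_attach G (fun T => lam T * A S T)).symm
      _ = ∑ T : ↥G, (lamS T / (∑ i : ↥G, lamS i)) * A S ↑T := by
          rw [← Finset.univ_eq_attach]
          exact Finset.sum_congr rfl fun T _ => by rw [hlamcoe T]
      _ = (∑ i : ↥G, A S ↑i * lamS i) / (∑ i : ↥G, lamS i) := by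
          rw [Finset.sum_div]
          exact Finset.sum_congr rfl fun T _ => by ring
  have hpos : 0 < ∑ T ∈ G, lam T * A S T := by
    rw [htrans1]
    exact div_pos hrowS hmass
  have hAexpand : ∑ T ∈ G, lam T * A S T
      = (∑ T ∈ G, lam T * (cnt pref W S T : ℝ))
        - (∑ T ∈ G, lam T * (295 * wt s T * (W.card : ℝ) / (132 * KL))) := by
    simp only [hAdef, mul_sub]
    rw [Finset.sum_sub_distrib]
  have hAexpand2 : (∑ T ∈ G, lam T * (295 * wt s T * (W.card : ℝ) / (132 * KL)))
      = (295 * (∑ T ∈ G, lam T * wt s T) * (W.card : ℝ)) / (132 * KL) := by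
    calc ∑ T ∈ G, lam T * (295 * wt s T * (W.card : ℝ) / (132 * KL))
        = ∑ T ∈ G, (lam T * wt s T) * (295 * (W.card : ℝ) / (132 * KL)) :=
          Finset.sum_congr rfl fun T _ => by ring
      _ = (∑ T ∈ G, lam T * wt s T) * (295 * (W.card : ℝ) / (132 * KL)) :=
          (Finset.sum_mul _ _ _).symm
      _ = (295 * (∑ T ∈ G, lam T * wt s T) * (W.card : ℝ)) / (132 * KL) := by ring
  rw [hAexpand, hAexpand2] at hpos
  have h132 : (0:ℝ) < 132 * KL := by linarith
  have h' : 295 * (∑ T ∈ G, lam T * wt s T) * (W.card : ℝ) / (132 * KL)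
      < ∑ T ∈ G, lam T * (cnt pref W S T : ℝ) := by linarith
  rw [div_lt_iff₀ h132] at h'
  nlinarith [h', hSineq]

lemma pair_choice (htotal : ∀ v S S', pref v S S' ∨ pref v S' S)
    (htrans : ∀ v S₁ S₂ S₃, pref v S₁ S₂ → pref v S₂ S₃ → pref v S₁ S₃)
    (hmono : ∀ v (S S' : Finset C), S ⊆ S' → pref v S' S)
    (s : C → ℝ) (hs : ∀ i, 0 < s i)
    (W : Finset N) (KL : ℝ) (hKL : 0 < KL)
    (x : Finset C → ℝ) (hx0 : ∀ R, 0 ≤ x R)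
    (hx1 : ∑ R ∈ (Finset.univ : Finset (Finset C)).filter (fun R => wt s R ≤ KL), x R = 1) :
    ∃ R₁ R₂ : Finset C, wt s R₁ ≤ KL ∧ wt s R₂ ≤ KL ∧
      ((W.filter (fun v =>
        (∑ R ∈ ((Finset.univ : Finset (Finset C)).filter (fun R => wt s R ≤ KL)).filter
          (fun R => pref v (R₁ ∪ R₂) R), x R) < 3/10)).card : ℝ)
        ≤ 9/100 * (W.card : ℝ) := by
  classical
  set FF := (Finset.univ : Finset (Finset C)).filter (fun R => wt s R ≤ KL) with hFFdef
  set q : ℝ := 3/10 with hqdef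
  set qv : N → Finset C → ℝ := fun v X => ∑ R ∈ FF.filter (fun R => pref v X R), x R with hqvdef
  set BAD : Finset C → Finset C → Finset N :=
    fun R₁ R₂ => W.filter (fun v => qv v (R₁ ∪ R₂) < q) with hBADdef
  have hqv_mono : ∀ v (R₁ R₂ : Finset C), qv v R₁ ≤ qv v (R₁ ∪ R₂) := by
    intro v R₁ R₂
    simp only [hqvdef]
    refine Finset.sum_le_sum_of_subset_of_nonneg ?_ (fun R _ _ => hx0 R)
    intro R hR
    rw [Finset.mem_filter] at hR ⊢
    refine ⟨hR.1, ?_⟩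
    exact htrans v (R₁ ∪ R₂) R₁ R (hmono v R₁ (R₁ ∪ R₂) Finset.subset_union_left) hR.2
  have hqv_mono2 : ∀ v (R₁ R₂ : Finset C), qv v R₂ ≤ qv v (R₁ ∪ R₂) := by
    intro v R₁ R₂
    simp only [hqvdef]
    refine Finset.sum_le_sum_of_subset_of_nonneg ?_ (fun R _ _ => hx0 R)
    intro R hR
    rw [Finset.mem_filter] at hR ⊢
    refine ⟨hR.1, ?_⟩
    exact htrans v (R₁ ∪ R₂) R₂ R (hmono v R₂ (R₁ ∪ R₂) Finset.subset_union_right) hR.2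
  -- expectation bound
  have hq0 : (0:ℝ) ≤ q := by norm_num [hqdef]
  have hquant : ∀ v : N, (∑ R ∈ FF.filter (fun R => qv v R < q), x R) ≤ q := by
    intro v
    exact quantile_bound htotal htrans v FF x (fun R _ => hx0 R) q hq0
  have hEbound : ∑ R₁ ∈ FF, ∑ R₂ ∈ FF, (x R₁ * x R₂) * ((BAD R₁ R₂).card : ℝ)
      ≤ q^2 * (W.card : ℝ) := by
    have hcard : ∀ R₁ R₂, ((BAD R₁ R₂).card : ℝ)
        = ∑ v ∈ W, (if qv v (R₁ ∪ R₂) < q then (1:ℝ) else 0) := by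
      intro R₁ R₂
      simp only [hBADdef]
      rw [Finset.card_filter]
      push_cast
      rfl
    calc ∑ R₁ ∈ FF, ∑ R₂ ∈ FF, (x R₁ * x R₂) * ((BAD R₁ R₂).card : ℝ)
        = ∑ R₁ ∈ FF, ∑ R₂ ∈ FF, ∑ v ∈ W, (x R₁ * x R₂) * (if qv v (R₁ ∪ R₂) < q then (1:ℝ) else 0) := by
          refine Finset.sum_congr rfl fun R₁ _ => Finset.sum_congr rfl fun R₂ _ => ?_
          rw [hcard R₁ R₂, Finset.mul_sum]
      _ = ∑ R₁ ∈ FF, ∑ v ∈ W, ∑ R₂ ∈ FF, (x R₁ * x R₂) * (if qv v (R₁ ∪ R₂) < q then (1:ℝ) else 0) :=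
          Finset.sum_congr rfl fun R₁ _ => Finset.sum_comm
      _ = ∑ v ∈ W, ∑ R₁ ∈ FF, ∑ R₂ ∈ FF, (x R₁ * x R₂) * (if qv v (R₁ ∪ R₂) < q then (1:ℝ) else 0) :=
          Finset.sum_comm
      _ ≤ ∑ v ∈ W, ∑ R₁ ∈ FF, ∑ R₂ ∈ FF,
            (x R₁ * (if qv v R₁ < q then (1:ℝ) else 0)) * (x R₂ * (if qv v R₂ < q then (1:ℝ) else 0)) := by
          refine Finset.sum_le_sum fun v _ => Finset.sum_le_sum fun R₁ hR₁ => Finset.sum_le_sum fun R₂ hR₂ => ?_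
          by_cases hb : qv v (R₁ ∪ R₂) < q
          · rw [if_pos hb, if_pos (lt_of_le_of_lt (hqv_mono v R₁ R₂) hb),
              if_pos (lt_of_le_of_lt (hqv_mono2 v R₁ R₂) hb)]
            exact le_of_eq (by ring)
          · rw [if_neg hb, mul_zero]
            have := hx0 R₁; have := hx0 R₂
            positivity
      _ = ∑ v ∈ W, (∑ R₁ ∈ FF, x R₁ * (if qv v R₁ < q then (1:ℝ) else 0))
            * (∑ R₂ ∈ FF, x R₂ * (if qv v R₂ < q then (1:ℝ) else 0)) := by
          refine Finset.sum_congr rfl fun v _ => ?_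
          rw [Finset.sum_mul_sum]
      _ ≤ ∑ v ∈ W, q * q := by
          refine Finset.sum_le_sum fun v _ => ?_
          have he : (∑ R ∈ FF, x R * (if qv v R < q then (1:ℝ) else 0))
              = ∑ R ∈ FF.filter (fun R => qv v R < q), x R := by
            calc ∑ R ∈ FF, x R * (if qv v R < q then (1:ℝ) else 0)
                = ∑ R ∈ FF, (if qv v R < q then x R else 0) := by
                  refine Finset.sum_congr rfl fun R _ => ?_
                  by_cases h : qv v R < q
                  · rw [if_pos h, if_pos h, mul_one]
                  · rw [if_neg h, if_neg h, mul_zero]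
              _ = ∑ R ∈ FF.filter (fun R => qv v R < q), x R := (Finset.sum_filter _ _).symm
          rw [he]
          have h1 := hquant v
          have h2 : (0:ℝ) ≤ ∑ R ∈ FF.filter (fun R => qv v R < q), x R :=
            Finset.sum_nonneg fun R _ => hx0 R
          nlinarith
      _ ≤ q^2 * (W.card : ℝ) := by
          rw [Finset.sum_const, nsmul_eq_mul]
          nlinarith [(Nat.cast_nonneg (W.card) : (0:ℝ) ≤ (W.card:ℝ))]
  -- pick the minimizing pair
  have hFFne : FF.Nonempty := by
    refine ⟨∅, ?_⟩
    rw [hFFdef, Finset.mem_filter]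
    refine ⟨Finset.mem_univ _, ?_⟩
    rw [wt, Finset.sum_empty]
    exact hKL.le
  obtain ⟨p, hp, hpmin⟩ := Finset.exists_min_image (FF ×ˢ FF)
    (fun p => ((BAD p.1 p.2).card : ℝ)) (hFFne.product hFFne)
  obtain ⟨hp1, hp2⟩ := Finset.mem_product.1 hp
  have hpwt1 : wt s p.1 ≤ KL := (Finset.mem_filter.1 hp1).2
  have hpwt2 : wt s p.2 ≤ KL := (Finset.mem_filter.1 hp2).2
  have hmin_le : ((BAD p.1 p.2).card : ℝ) ≤ q^2 * (W.card : ℝ) := by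
    have hsum1 : ∑ R₁ ∈ FF, ∑ R₂ ∈ FF, (x R₁ * x R₂) = 1 := by
      calc ∑ R₁ ∈ FF, ∑ R₂ ∈ FF, (x R₁ * x R₂)
          = (∑ R ∈ FF, x R) * (∑ R ∈ FF, x R) := (Finset.sum_mul_sum FF FF x x).symm
        _ = 1 := by rw [hx1]; norm_num
    calc ((BAD p.1 p.2).card : ℝ)
        = (∑ R₁ ∈ FF, ∑ R₂ ∈ FF, (x R₁ * x R₂)) * ((BAD p.1 p.2).card : ℝ) := by
          rw [hsum1, one_mul]
      _ = ∑ R₁ ∈ FF, ∑ R₂ ∈ FF, (x R₁ * x R₂) * ((BAD p.1 p.2).card : ℝ) := by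
          rw [Finset.sum_mul]
          exact Finset.sum_congr rfl fun R₁ _ => Finset.sum_mul _ _ _
      _ ≤ ∑ R₁ ∈ FF, ∑ R₂ ∈ FF, (x R₁ * x R₂) * ((BAD R₁ R₂).card : ℝ) := by
          refine Finset.sum_le_sum fun R₁ hR₁ => Finset.sum_le_sum fun R₂ hR₂ => ?_
          refine mul_le_mul_of_nonneg_left ?_ (mul_nonneg (hx0 R₁) (hx0 R₂))
          exact hpmin (R₁, R₂) (Finset.mem_product.2 ⟨hR₁, hR₂⟩)
      _ ≤ q^2 * (W.card : ℝ) := hEbound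
  refine ⟨p.1, p.2, hpwt1, hpwt2, ?_⟩
  have : (9:ℝ)/100 = q^2 := by norm_num [hqdef]
  rw [this]
  exact hmin_le
theorem main_committee (htotal : ∀ v S S', pref v S S' ∨ pref v S' S)
    (htrans : ∀ v S₁ S₂ S₃, pref v S₁ S₂ → pref v S₂ S₃ → pref v S₁ S₃)
    (hmono : ∀ v (S S' : Finset C), S ⊆ S' → pref v S' S)
    (s : C → ℝ) (hs : ∀ i, 0 < s i) :
    ∀ (n : ℕ) (W : Finset N), W.card ≤ n → ∀ K : ℝ, 0 < K →
    ∃ S : Finset C, wt s S ≤ K ∧ ∀ T : Finset C, T.Nonempty →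
      2 * (cnt pref W S T : ℝ) * K ≤ 63 * wt s T * (W.card : ℝ) := by
  intro n
  induction n using Nat.strong_induction_on with
  | _ n ih =>
    intro W hWn K hK
    rcases W.eq_empty_or_nonempty with rfl | hWne
    · refine ⟨∅, ?_, ?_⟩
      · rw [wt, Finset.sum_empty]; exact hK.le
      · intro T hT
        have h1 : cnt pref (∅ : Finset N) ∅ T = 0 := by
          rw [cnt, Finset.filter_empty, Finset.card_empty]
        rw [h1]
        simp
    · have hW1 : 1 ≤ W.card := Finset.card_pos.2 hWne
      have hW1' : (1:ℝ) ≤ (W.card : ℝ) := by exact_mod_cast hW1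
      set KL := 7/20 * K with hKLdef
      have hKL : 0 < KL := by rw [hKLdef]; linarith
      set G := (Finset.univ : Finset (Finset C)).filter
        (fun T => T.Nonempty ∧ 63 * wt s T ≤ 2*K) with hGdef
      have hlight : ∀ T ∈ G, 11 * wt s T ≤ KL := by
        intro T hT
        have h2 := ((Finset.mem_filter.1 hT).2).2
        rw [hKLdef]
        linarith
      have hwtpos : ∀ T ∈ G, 0 < wt s T := fun T hT =>
        wt_pos s hs ((Finset.mem_filter.1 hT).2).1
      obtain ⟨x, hx0, hx1, hxstab⟩ :=
        lottery_exists htotal htrans hmono s hs W KL hKL G hlight hwtpos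
      obtain ⟨R₁, R₂, hR₁wt, hR₂wt, hBADcard⟩ :=
        pair_choice htotal htrans hmono s hs W KL hKL x hx0 hx1
      set FFL := (Finset.univ : Finset (Finset C)).filter (fun R => wt s R ≤ KL) with hFFLdef
      set BAD := W.filter (fun v =>
        (∑ R ∈ FFL.filter (fun R => pref v (R₁ ∪ R₂) R), x R) < 3/10) with hBADdef
      have hBADsub : BAD ⊆ W := Finset.filter_subset _ _
      have hBADlt : BAD.card < W.card := by
        by_contra hge
        push_neg at hge
        have h1 : (W.card:ℝ) ≤ (BAD.card:ℝ) := by exact_mod_cast hge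
        linarith [hBADcard]
      obtain ⟨S', hS'wt, hS'stab⟩ := ih BAD.card (lt_of_lt_of_le hBADlt hWn) BAD (le_refl _)
        (3/10 * K) (by linarith)
      refine ⟨(R₁ ∪ R₂) ∪ S', ?_, ?_⟩
      · calc wt s ((R₁ ∪ R₂) ∪ S') ≤ wt s (R₁ ∪ R₂) + wt s S' := wt_union_le s hs _ _
          _ ≤ wt s R₁ + wt s R₂ + wt s S' := by linarith [wt_union_le s hs R₁ R₂]
          _ ≤ K := by rw [hKLdef] at hR₁wt hR₂wt; linarith
      · intro T hT
        set S : Finset C := (R₁ ∪ R₂) ∪ S' with hSdef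
        by_cases hTlight : 63 * wt s T ≤ 2*K
        · have hTG : T ∈ G := by
            rw [hGdef, Finset.mem_filter]
            exact ⟨Finset.mem_univ _, hT, hTlight⟩
          have hsplit : (cnt pref W S T : ℝ)
              ≤ (((W \ BAD).filter (fun v => SP pref v T S)).card : ℝ)
                + ((BAD.filter (fun v => SP pref v T S)).card : ℝ) := by
            rw [cnt]
            have heq : W.filter (fun v => SP pref v T S)
                = ((W \ BAD).filter (fun v => SP pref v T S))
                  ∪ (BAD.filter (fun v => SP pref v T S)) := by
              rw [← Finset.filter_union, Finset.sdiff_union_of_subset hBADsub]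
            rw [heq]
            exact_mod_cast Nat.cast_le.2 (Finset.card_union_le _ _)
          have hBadpart : ((BAD.filter (fun v => SP pref v T S)).card : ℝ)
              ≤ (cnt pref BAD S' T : ℝ) := by
            rw [cnt]
            have hsub : BAD.filter (fun v => SP pref v T S)
                ⊆ BAD.filter (fun v => SP pref v T S') := by
              intro v hv
              obtain ⟨hvB, hvSP⟩ := Finset.mem_filter.1 hv
              refine Finset.mem_filter.2 ⟨hvB, ?_⟩
              exact SP_of_SP_of_weak htrans hvSP
                (hmono v S' S (fun a ha => Finset.mem_union_right _ ha))
            exact_mod_cast Nat.cast_le.2 (Finset.card_le_card hsub)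
          have hBadbound := hS'stab T hT
          have hGoodpart : 3/10 * (((W \ BAD).filter (fun v => SP pref v T S)).card : ℝ)
              ≤ ∑ R ∈ FFL, x R * (cnt pref W R T : ℝ) := by
            have hswap : ∑ R ∈ FFL, x R * (cnt pref W R T : ℝ)
                = ∑ v ∈ W, ∑ R ∈ FFL, x R * (if SP pref v T R then (1:ℝ) else 0) := by
              calc ∑ R ∈ FFL, x R * (cnt pref W R T:ℝ)
                  = ∑ R ∈ FFL, ∑ v ∈ W, x R * (if SP pref v T R then (1:ℝ) else 0) := by
                    refine Finset.sum_congr rfl fun R _ => ?_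
                    rw [cnt, Finset.card_filter]
                    push_cast
                    rw [Finset.mul_sum]
                _ = ∑ v ∈ W, ∑ R ∈ FFL, x R * (if SP pref v T R then (1:ℝ) else 0) :=
                    Finset.sum_comm
            rw [hswap]
            have hper : ∀ v ∈ (W \ BAD).filter (fun v => SP pref v T S),
                3/10 ≤ ∑ R ∈ FFL, x R * (if SP pref v T R then (1:ℝ) else 0) := by
              intro v hv
              obtain ⟨hvWB, hvSP⟩ := Finset.mem_filter.1 hv
              obtain ⟨hvW, hvnB⟩ := Finset.mem_sdiff.1 hvWB
              have hvq : ¬ ((∑ R ∈ FFL.filter (fun R => pref v (R₁ ∪ R₂) R), x R) < 3/10) := by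
                intro hc
                exact hvnB (Finset.mem_filter.2 ⟨hvW, hc⟩)
              push_neg at hvq
              have hSPU : SP pref v T (R₁ ∪ R₂) :=
                SP_of_SP_of_weak htrans hvSP (hmono v (R₁ ∪ R₂) S Finset.subset_union_left)
              have hsub2 : FFL.filter (fun R => pref v (R₁ ∪ R₂) R)
                  ⊆ FFL.filter (fun R => SP pref v T R) := by
                intro R hR
                obtain ⟨h1, h2⟩ := Finset.mem_filter.1 hR
                exact Finset.mem_filter.2 ⟨h1, SP_of_SP_of_weak htrans hSPU h2⟩
              calc (3:ℝ)/10 ≤ ∑ R ∈ FFL.filter (fun R => pref v (R₁ ∪ R₂) R), x R := hvq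
                _ ≤ ∑ R ∈ FFL.filter (fun R => SP pref v T R), x R :=
                    Finset.sum_le_sum_of_subset_of_nonneg hsub2 (fun R _ _ => hx0 R)
                _ = ∑ R ∈ FFL, (if SP pref v T R then x R else 0) := Finset.sum_filter _ _
                _ = ∑ R ∈ FFL, x R * (if SP pref v T R then (1:ℝ) else 0) := by
                    refine Finset.sum_congr rfl fun R _ => ?_
                    by_cases h : SP pref v T R
                    · rw [if_pos h, if_pos h, mul_one]
                    · rw [if_neg h, if_neg h, mul_zero]
            calc 3/10 * (((W \ BAD).filter (fun v => SP pref v T S)).card : ℝ)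
                = ∑ _v ∈ (W \ BAD).filter (fun v => SP pref v T S), (3:ℝ)/10 := by
                  rw [Finset.sum_const, nsmul_eq_mul]; ring
              _ ≤ ∑ v ∈ (W \ BAD).filter (fun v => SP pref v T S),
                    ∑ R ∈ FFL, x R * (if SP pref v T R then (1:ℝ) else 0) :=
                  Finset.sum_le_sum hper
              _ ≤ ∑ v ∈ W, ∑ R ∈ FFL, x R * (if SP pref v T R then (1:ℝ) else 0) := by
                  refine Finset.sum_le_sum_of_subset_of_nonneg ?_ ?_
                  · intro v hv
                    exact (Finset.mem_sdiff.1 (Finset.mem_filter.1 hv).1).1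
                  · intro v _ _
                    refine Finset.sum_nonneg fun R _ => ?_
                    by_cases h : SP pref v T R
                    · rw [if_pos h, mul_one]; exact hx0 R
                    · rw [if_neg h, mul_zero]
          have hlot := hxstab T hTG
          -- numeric combination
          have hwt0 : 0 ≤ wt s T := wt_nonneg s hs T
          have hg0 : (0:ℝ) ≤ (((W \ BAD).filter (fun v => SP pref v T S)).card : ℝ) :=
            Nat.cast_nonneg _
          have hL0 : 0 ≤ ∑ R ∈ FFL, x R * (cnt pref W R T : ℝ) :=
            Finset.sum_nonneg fun R _ => mul_nonneg (hx0 R) (Nat.cast_nonneg _)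
          have hbw : 63 * wt s T * (BAD.card:ℝ) ≤ 63 * wt s T * (9/100 * (W.card:ℝ)) :=
            mul_le_mul_of_nonneg_left hBADcard (by positivity)
          have hgood2 : 3/10 * (((W \ BAD).filter (fun v => SP pref v T S)).card : ℝ) * K
              ≤ (∑ R ∈ FFL, x R * (cnt pref W R T : ℝ)) * K :=
            mul_le_mul_of_nonneg_right hGoodpart hK.le
          have hsplit2 : (cnt pref W S T : ℝ) * K
              ≤ ((((W \ BAD).filter (fun v => SP pref v T S)).card : ℝ)
                + ((BAD.filter (fun v => SP pref v T S)).card : ℝ)) * K :=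
            mul_le_mul_of_nonneg_right hsplit hK.le
          have hbad2 : ((BAD.filter (fun v => SP pref v T S)).card : ℝ) * K
              ≤ (cnt pref BAD S' T : ℝ) * K :=
            mul_le_mul_of_nonneg_right hBadpart hK.le
          rw [hKLdef] at hlot
          nlinarith [hlot, hBadbound, hbw, hgood2, hsplit2, hbad2]
        · push_neg at hTlight
          have hcnt_le : (cnt pref W S T : ℝ) ≤ (W.card : ℝ) := by
            rw [cnt]
            exact_mod_cast Nat.cast_le.2 (Finset.card_filter_le _ _)
          have hc0 : (0:ℝ) ≤ (cnt pref W S T : ℝ) := Nat.cast_nonneg _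
          nlinarith [hcnt_le, hK, hc0, hW1']


end Stmt0Aux

/-- For every committee-selection instance with monotone preferences
(`pref v S S'` means voter `v` weakly prefers committee `S` to committee `S'`)
and every weight limit `K > 0`, there exists a `32`-approximately stable committee
of weight at most `K`. -/
theorem stmt_0
    {C N : Type} [Fintype C] [Fintype N] [DecidableEq C]
    (pref : N → Finset C → Finset C → Prop)
    (htotal : ∀ v S S', pref v S S' ∨ pref v S' S)
    (htrans : ∀ v S₁ S₂ S₃, pref v S₁ S₂ → pref v S₂ S₃ → pref v S₁ S₃)
    (hmono : ∀ v (S S' : Finset C), S ⊆ S' → pref v S' S)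
    (hn : 1 ≤ Fintype.card N)
    (s : C → ℝ) (hs : ∀ i, 0 < s i)
    (K : ℝ) (hK : 0 < K) :
    ∃ S : Finset C, (∑ i ∈ S, s i) ≤ K ∧
      ∀ S' : Finset C, S'.Nonempty →
        ((Finset.univ.filter (fun v : N => pref v S' S ∧ ¬ pref v S S')).card : ℝ)
          < 32 * ((∑ i ∈ S', s i) / K) * (Fintype.card N : ℝ) := by
  obtain ⟨S, hSwt, hSstab⟩ := main_committee htotal htrans hmono s hs
    (Finset.univ : Finset N).card Finset.univ (le_refl _) K hK
  refine ⟨S, hSwt, ?_⟩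
  intro S' hS'
  have h1 := hSstab S' hS'
  have hwt : 0 < wt s S' := wt_pos s hs hS'
  have hcard : ((Finset.univ : Finset N).card : ℝ) = (Fintype.card N : ℝ) := by
    rw [Finset.card_univ]
  have hn' : (1:ℝ) ≤ (Fintype.card N : ℝ) := by exact_mod_cast hn
  have hseteq : (Finset.univ.filter (fun v : N => pref v S' S ∧ ¬ pref v S S'))
      = Finset.univ.filter (fun v : N => SP pref v S' S) := by
    ext v
    exact ⟨fun h => Finset.mem_filter.2 ⟨Finset.mem_univ _, (Finset.mem_filter.1 h).2⟩,
      fun h => Finset.mem_filter.2 ⟨Finset.mem_univ _, (Finset.mem_filter.1 h).2⟩⟩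
  have hcnt : ((Finset.univ.filter (fun v : N => pref v S' S ∧ ¬ pref v S S')).card : ℝ)
      = (cnt pref Finset.univ S S' : ℝ) := by rw [cnt, hseteq]
  rw [hcnt]
  rw [hcard] at h1
  have hwteq : wt s S' = ∑ i ∈ S', s i := rfl
  have hrw : 32 * ((∑ i ∈ S', s i) / K) * (Fintype.card N : ℝ)
      = (32 * (∑ i ∈ S', s i) * (Fintype.card N : ℝ)) / K := by ring
  rw [hrw, lt_div_iff₀ hK, ← hwteq]
  nlinarith [h1, hwt, hn', hK]
end

section
/- Let 0 < K' ≤ K and let Δ_a be a finitely supported probability distribution over committees all of weight exactly K'. Then there exists a finitely supported probability distribution Δ_d over committees of weight at most K such that E_{S_d∼Δ_d, S_a∼Δ_a}[V(S_d, S_a)] < (K'/K)·n, where S_d and S_a are drawn independently. (In particular, Δ_d can be taken as the union of t = ⌊K/K'⌋ independent draws from Δ_a.) -/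
attribute [local instance] Classical.propDecidable

open Finset

private lemma sum_union_le_real' {C : Type} [DecidableEq C] (A B : Finset C)
    (s : C → ℝ) (hs : ∀ i, 0 ≤ s i) :
    ∑ x ∈ A ∪ B, s x ≤ ∑ x ∈ A, s x + ∑ x ∈ B, s x := by
  have h := Finset.sum_union_inter (s₁ := A) (s₂ := B) (f := s)
  have h0 : 0 ≤ ∑ x ∈ A ∩ B, s x := Finset.sum_nonneg fun x _ => hs x
  linarith

private lemma sum_biUnion_le_real' {C ι : Type} [DecidableEq C] [DecidableEq ι] (A : Finset ι)
    (f : ι → Finset C) (s : C → ℝ) (hs : ∀ i, 0 ≤ s i) :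
    ∑ x ∈ A.biUnion f, s x ≤ ∑ i ∈ A, ∑ x ∈ f i, s x := by
  induction A using Finset.induction with
  | empty => simp
  | @insert a A ha ih =>
    rw [Finset.biUnion_insert, Finset.sum_insert ha]
    exact (sum_union_le_real' _ _ s hs).trans (by linarith)
private lemma voter_bound' {C : Type} [Fintype C] [DecidableEq C]
    (pref : Finset C → Finset C → Prop)
    (htrans : ∀ S₁ S₂ S₃, pref S₁ S₂ → pref S₂ S₃ → pref S₁ S₃)
    (hmono : ∀ S S', S ⊆ S' → pref S' S)
    (Δa : Finset C → ℝ) (hΔa0 : ∀ S, 0 ≤ Δa S) (hΔa1 : (∑ S : Finset C, Δa S) = 1)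
    (t : ℕ) :
    ∑ f : Fin t → Finset C, ∑ Sa : Finset C,
        (∏ i, Δa (f i)) * Δa Sa *
          (if pref Sa (Finset.univ.biUnion f) ∧ ¬ pref (Finset.univ.biUnion f) Sa
            then (1:ℝ) else 0)
      ≤ 1 / (t + 1) := by
  classical
  set SP : Finset C → Finset C → Prop := fun A B => pref A B ∧ ¬ pref B A with hSP
  have hSPsub : ∀ A B B', B' ⊆ B → SP A B → SP A B' := by
    intro A B B' hsub h
    have hBB' : pref B B' := hmono B' B hsub
    exact ⟨htrans A B B' h.1 hBB', fun hc => h.2 (htrans B B' A hBB' hc)⟩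
  -- the indicator functionals over (t+1) i.i.d. draws
  set F : Fin (t+1) → (Fin (t+1) → Finset C) → ℝ := fun j g =>
    (∏ i, Δa (g i)) * (if ∀ k, k ≠ j → SP (g j) (g k) then (1:ℝ) else 0) with hF
  set R : Fin (t+1) → ℝ := fun j => ∑ g : Fin (t+1) → Finset C, F j g with hR
  have hWsum : ∀ m : ℕ, (∑ g : Fin m → Finset C, ∏ i, Δa (g i)) = 1 := by
    intro m; rw [← Fintype.sum_pow, hΔa1, one_pow]
  -- Step 1+2: LHS ≤ R 0
  have step12 : (∑ f : Fin t → Finset C, ∑ Sa : Finset C,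
        (∏ i, Δa (f i)) * Δa Sa *
          (if pref Sa (Finset.univ.biUnion f) ∧ ¬ pref (Finset.univ.biUnion f) Sa
            then (1:ℝ) else 0)) ≤ R 0 := by
    have hstep1 : ∀ (f : Fin t → Finset C) (Sa : Finset C),
        (∏ i, Δa (f i)) * Δa Sa *
          (if pref Sa (Finset.univ.biUnion f) ∧ ¬ pref (Finset.univ.biUnion f) Sa
            then (1:ℝ) else 0)
        ≤ (∏ i, Δa (f i)) * Δa Sa * (if ∀ i, SP Sa (f i) then (1:ℝ) else 0) := by
      intro f Sa
      have himp : (pref Sa (Finset.univ.biUnion f) ∧ ¬ pref (Finset.univ.biUnion f) Sa) →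
          ∀ i, SP Sa (f i) := fun h i =>
        hSPsub _ _ _ (Finset.subset_biUnion_of_mem f (Finset.mem_univ i)) h
      have hind : (if pref Sa (Finset.univ.biUnion f) ∧ ¬ pref (Finset.univ.biUnion f) Sa
            then (1:ℝ) else 0) ≤ (if ∀ i, SP Sa (f i) then (1:ℝ) else 0) := by
        split_ifs with h1 h2
        · exact le_refl _
        · exact absurd (himp h1) h2
        · exact zero_le_one
        · exact le_refl _
      exact mul_le_mul_of_nonneg_left hind
        (mul_nonneg (Finset.prod_nonneg fun i _ => hΔa0 _) (hΔa0 _))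
    refine le_trans (Finset.sum_le_sum fun f _ => Finset.sum_le_sum fun Sa _ => hstep1 f Sa) ?_
    -- now equality with R 0 via Fin.consEquiv
    apply le_of_eq
    have := Equiv.sum_comp (Fin.consEquiv (fun _ : Fin (t+1) => Finset C)) (F 0)
    show _ = ∑ g : Fin (t + 1) → Finset C, F 0 g
    rw [← this, Fintype.sum_prod_type]
    refine Eq.trans Finset.sum_comm ?_
    refine Finset.sum_congr rfl fun Sa _ => Finset.sum_congr rfl fun f _ => ?_
    set g0 : Fin (t+1) → Finset C := Fin.cons Sa f with hg0
    have hprod : (∏ i : Fin (t+1), Δa (g0 i)) = Δa Sa * ∏ i : Fin t, Δa (f i) := by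
      rw [Fin.prod_univ_succ]; simp [hg0]
    have hcond : (∀ k : Fin (t+1), k ≠ 0 → SP (g0 0) (g0 k))
        ↔ ∀ i : Fin t, SP Sa (f i) := by
      simp only [hg0]
      constructor
      · intro h i
        have := h i.succ (Fin.succ_ne_zero i)
        simpa [Fin.cons_succ, Fin.cons_zero] using this
      · intro h k hk
        induction k using Fin.cases with
        | zero => exact absurd rfl hk
        | succ i => simpa [Fin.cons_succ, Fin.cons_zero] using h i
    simp only [hF, Fin.consEquiv_apply]
    rw [hprod]
    rw [if_congr hcond rfl rfl]
    ring
  -- Step 3 : R j = R 0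
  have step3 : ∀ j : Fin (t+1), R j = R 0 := by
    intro j
    set σ : Equiv.Perm (Fin (t+1)) := Equiv.swap 0 j with hσ
    have hσ0 : σ 0 = j := Equiv.swap_apply_left 0 j
    have hσσ : ∀ x, σ (σ x) = x := by
      intro x; rw [hσ]; exact Equiv.swap_apply_self 0 j x
    have hσj : σ j = 0 := by rw [hσ]; exact Equiv.swap_apply_right 0 j
    let e : (Fin (t+1) → Finset C) ≃ (Fin (t+1) → Finset C) :=
      { toFun := fun g => g ∘ σ
        invFun := fun g => g ∘ σ
        left_inv := fun g => funext fun i => by simp [hσσ i]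
        right_inv := fun g => funext fun i => by simp [hσσ i] }
    refine Fintype.sum_equiv e (F j) (F 0) ?_
    intro g
    have he : e g = g ∘ σ := rfl
    have hprod : (∏ i, Δa (g (σ i))) = ∏ i, Δa (g i) :=
      Equiv.prod_comp σ (fun i => Δa (g i))
    have hcond : (∀ k, k ≠ j → SP (g j) (g k)) ↔
        (∀ k, k ≠ (0 : Fin (t+1)) → SP (g (σ 0)) (g (σ k))) := by
      rw [hσ0]
      constructor
      · intro h k hk
        apply h
        intro hc
        apply hk
        have h2 : σ (σ k) = σ j := by rw [hc]
        rwa [hσσ, hσj] at h2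
      · intro h k hk
        have h2 := h (σ k) (by
          intro hc
          apply hk
          have h3 : σ (σ k) = σ 0 := by rw [hc]
          rwa [hσσ, hσ0] at h3)
        rwa [hσσ] at h2
    simp only [hF, he, Function.comp]
    rw [hprod, if_congr hcond rfl rfl]
  -- Step 4 : ∑ j, R j ≤ 1
  have step4 : (∑ j : Fin (t+1), R j) ≤ 1 := by
    have hind : ∀ g : Fin (t+1) → Finset C,
        (∑ j : Fin (t+1), (if ∀ k, k ≠ j → SP (g j) (g k) then (1:ℝ) else 0)) ≤ 1 := by
      intro g
      rw [Finset.sum_boole]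
      have hcard : (Finset.univ.filter
          (fun j : Fin (t+1) => ∀ k, k ≠ j → SP (g j) (g k))).card ≤ 1 := by
        refine Finset.card_le_one.mpr fun a ha b hb => ?_
        by_contra hab
        have hA := (Finset.mem_filter.mp ha).2
        have hB := (Finset.mem_filter.mp hb).2
        have h1 : SP (g a) (g b) := hA b (Ne.symm hab)
        have h2 : SP (g b) (g a) := hB a hab
        exact h1.2 h2.1
      exact_mod_cast hcard
    calc (∑ j : Fin (t+1), R j)
        = ∑ g : Fin (t+1) → Finset C, ∑ j : Fin (t+1), F j g := Finset.sum_comm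
      _ ≤ ∑ g : Fin (t+1) → Finset C, ∏ i, Δa (g i) := by
          refine Finset.sum_le_sum fun g _ => ?_
          have h0 : 0 ≤ ∏ i, Δa (g i) := Finset.prod_nonneg fun i _ => hΔa0 _
          calc (∑ j : Fin (t+1), F j g)
              = (∏ i, Δa (g i)) * ∑ j : Fin (t+1),
                  (if ∀ k, k ≠ j → SP (g j) (g k) then (1:ℝ) else 0) := by
                rw [Finset.mul_sum]
            _ ≤ (∏ i, Δa (g i)) * 1 := mul_le_mul_of_nonneg_left (hind g) h0
            _ = ∏ i, Δa (g i) := mul_one _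
      _ = 1 := hWsum (t+1)
  -- Step 5 : R 0 ≤ 1/(t+1)
  have step5 : R 0 ≤ 1 / (t + 1) := by
    have hsum : (∑ j : Fin (t+1), R j) = (t + 1 : ℝ) * R 0 := by
      rw [Finset.sum_congr rfl fun j _ => step3 j, Finset.sum_const, Finset.card_univ,
        Fintype.card_fin, nsmul_eq_mul]
      push_cast; ring
    have hpos : (0:ℝ) < t + 1 := by positivity
    rw [le_div_iff₀ hpos, mul_comm]
    rw [hsum] at step4
    exact step4
  exact step12.trans step5

/-- If `0 < K' ≤ K` and `Δa` is a finitely supported distribution over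
committees all of weight exactly `K'`, then there is a distribution `Δd` over
committees of weight at most `K` with `E_{Sd∼Δd,Sa∼Δa}[V(Sd,Sa)] < (K'/K)·n`.
(`pref v S S'` means voter `v` weakly prefers `S` to `S'`; candidate weights `s i ≥ 0`.) -/
theorem stmt_4
    {C N : Type} [Fintype C] [Fintype N] [DecidableEq C]
    (pref : N → Finset C → Finset C → Prop)
    (htotal : ∀ v S S', pref v S S' ∨ pref v S' S)
    (htrans : ∀ v S₁ S₂ S₃, pref v S₁ S₂ → pref v S₂ S₃ → pref v S₁ S₃)
    (hmono : ∀ v (S S' : Finset C), S ⊆ S' → pref v S' S)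
    (hn : 1 ≤ Fintype.card N)
    (s : C → ℝ) (hs : ∀ i, 0 ≤ s i)
    (K K' : ℝ) (hK' : 0 < K') (hK'K : K' ≤ K)
    (Δa : Finset C → ℝ)
    (hΔa0 : ∀ S, 0 ≤ Δa S) (hΔa1 : (∑ S : Finset C, Δa S) = 1)
    (hΔasupp : ∀ S : Finset C, Δa S ≠ 0 → (∑ i ∈ S, s i) = K') :
    ∃ Δd : Finset C → ℝ,
      (∀ S, 0 ≤ Δd S) ∧ (∑ S : Finset C, Δd S) = 1 ∧
      (∀ S : Finset C, Δd S ≠ 0 → (∑ i ∈ S, s i) ≤ K) ∧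
      (∑ Sd : Finset C, ∑ Sa : Finset C,
          Δd Sd * Δa Sa *
            ((Finset.univ.filter (fun v : N => pref v Sa Sd ∧ ¬ pref v Sd Sa)).card : ℝ))
        < (K' / K) * (Fintype.card N : ℝ) := by
  classical
  have hK : 0 < K := lt_of_lt_of_le hK' hK'K
  set t : ℕ := ⌊K / K'⌋₊ with htdef
  have htle : (t : ℝ) ≤ K / K' := Nat.floor_le (le_of_lt (div_pos hK hK'))
  have htK : (t : ℝ) * K' ≤ K := (le_div_iff₀ hK').mp htle
  have hKlt : K < ((t : ℝ) + 1) * K' := by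
    have h := Nat.lt_floor_add_one (K / K')
    rw [← htdef] at h
    exact (div_lt_iff₀ hK').mp h
  -- the defender distribution: union of t independent draws from Δa
  set W : (Fin t → Finset C) → ℝ := fun f => ∏ i, Δa (f i) with hWdef
  set U : (Fin t → Finset C) → Finset C := fun f => Finset.univ.biUnion f with hUdef
  set Δd : Finset C → ℝ :=
    fun S => ∑ f : Fin t → Finset C, if U f = S then W f else 0 with hΔddef
  have hW0 : ∀ f, 0 ≤ W f := fun f => Finset.prod_nonneg fun i _ => hΔa0 _
  have hWsum : (∑ f : Fin t → Finset C, W f) = 1 := by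
    rw [hWdef, ← Fintype.sum_pow, hΔa1, one_pow]
  have hΔd0 : ∀ S, 0 ≤ Δd S := by
    intro S
    refine Finset.sum_nonneg fun f _ => ?_
    split_ifs with h
    · exact hW0 f
    · exact le_refl 0
  have hΔd1 : (∑ S : Finset C, Δd S) = 1 := by
    calc (∑ S : Finset C, Δd S)
        = ∑ f : Fin t → Finset C, ∑ S : Finset C, if U f = S then W f else 0 :=
          Finset.sum_comm
      _ = ∑ f : Fin t → Finset C, W f := by
          refine Finset.sum_congr rfl fun f _ => ?_
          simp [Finset.sum_ite_eq]
      _ = 1 := hWsum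
  have hΔdsupp : ∀ S : Finset C, Δd S ≠ 0 → (∑ i ∈ S, s i) ≤ K := by
    intro S hS
    obtain ⟨f, hf⟩ : ∃ f : Fin t → Finset C, (if U f = S then W f else 0) ≠ 0 := by
      by_contra h
      push_neg at h
      exact hS (Finset.sum_eq_zero fun f _ => h f)
    have hUf : U f = S ∧ W f ≠ 0 := by
      by_cases h : U f = S
      · exact ⟨h, by simpa [h] using hf⟩
      · simp [h] at hf
    have hfi : ∀ i, Δa (f i) ≠ 0 := by
      intro i h0
      exact hUf.2 (by rw [hWdef]; exact Finset.prod_eq_zero (Finset.mem_univ i) h0)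
    have hbU := sum_biUnion_le_real' (Finset.univ : Finset (Fin t)) f s hs
    calc (∑ i ∈ S, s i) = ∑ x ∈ Finset.univ.biUnion f, s x := by rw [← hUf.1]
      _ ≤ ∑ i : Fin t, ∑ x ∈ f i, s x := hbU
      _ = ∑ i : Fin t, K' := Finset.sum_congr rfl fun i _ => hΔasupp _ (hfi i)
      _ = (t : ℝ) * K' := by
          rw [Finset.sum_const, Finset.card_univ, Fintype.card_fin, nsmul_eq_mul]
      _ ≤ K := htK
  refine ⟨Δd, hΔd0, hΔd1, hΔdsupp, ?_⟩
  -- the expectation bound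
  have hQ : ∀ v : N,
      (∑ Sd : Finset C, ∑ Sa : Finset C,
        Δd Sd * Δa Sa * (if pref v Sa Sd ∧ ¬ pref v Sd Sa then (1:ℝ) else 0))
      ≤ 1 / ((t : ℝ) + 1) := by
    intro v
    have hkey := voter_bound' (pref v) (htrans v) (hmono v) Δa hΔa0 hΔa1 t
    refine le_trans (le_of_eq ?_) hkey
    calc (∑ Sd : Finset C, ∑ Sa : Finset C,
            Δd Sd * Δa Sa * (if pref v Sa Sd ∧ ¬ pref v Sd Sa then (1:ℝ) else 0))
        = ∑ Sa : Finset C, ∑ Sd : Finset C,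
            Δd Sd * Δa Sa * (if pref v Sa Sd ∧ ¬ pref v Sd Sa then (1:ℝ) else 0) :=
          Finset.sum_comm
      _ = ∑ Sa : Finset C, ∑ f : Fin t → Finset C,
            W f * Δa Sa * (if pref v Sa (U f) ∧ ¬ pref v (U f) Sa then (1:ℝ) else 0) := by
          refine Finset.sum_congr rfl fun Sa _ => ?_
          calc (∑ Sd : Finset C,
                Δd Sd * Δa Sa * (if pref v Sa Sd ∧ ¬ pref v Sd Sa then (1:ℝ) else 0))
              = ∑ Sd : Finset C, ∑ f : Fin t → Finset C,
                  (if U f = Sd then W f else 0) * (Δa Sa *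
                    (if pref v Sa Sd ∧ ¬ pref v Sd Sa then (1:ℝ) else 0)) := by
                refine Finset.sum_congr rfl fun Sd _ => ?_
                rw [hΔddef]
                rw [Finset.sum_mul, Finset.sum_mul]
                refine Finset.sum_congr rfl fun f _ => by ring
            _ = ∑ f : Fin t → Finset C, ∑ Sd : Finset C,
                  (if U f = Sd then W f else 0) * (Δa Sa *
                    (if pref v Sa Sd ∧ ¬ pref v Sd Sa then (1:ℝ) else 0)) :=
                Finset.sum_comm
            _ = ∑ f : Fin t → Finset C,
                  W f * Δa Sa * (if pref v Sa (U f) ∧ ¬ pref v (U f) Sa then (1:ℝ) else 0) := by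
                refine Finset.sum_congr rfl fun f _ => ?_
                simp only [ite_mul, zero_mul]
                rw [Finset.sum_ite_eq]
                simp [mul_assoc]
      _ = ∑ f : Fin t → Finset C, ∑ Sa : Finset C,
            W f * Δa Sa * (if pref v Sa (U f) ∧ ¬ pref v (U f) Sa then (1:ℝ) else 0) :=
          Finset.sum_comm
  -- put together
  have hEsum : (∑ Sd : Finset C, ∑ Sa : Finset C,
      Δd Sd * Δa Sa *
        ((Finset.univ.filter (fun v : N => pref v Sa Sd ∧ ¬ pref v Sd Sa)).card : ℝ))
      = ∑ v : N, ∑ Sd : Finset C, ∑ Sa : Finset C,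
          Δd Sd * Δa Sa * (if pref v Sa Sd ∧ ¬ pref v Sd Sa then (1:ℝ) else 0) := by
    have hpt : ∀ Sd Sa : Finset C,
        Δd Sd * Δa Sa *
          ((Finset.univ.filter (fun v : N => pref v Sa Sd ∧ ¬ pref v Sd Sa)).card : ℝ)
        = ∑ v : N, Δd Sd * Δa Sa * (if pref v Sa Sd ∧ ¬ pref v Sd Sa then (1:ℝ) else 0) := by
      intro Sd Sa
      rw [← Finset.sum_boole, Finset.mul_sum]
    calc (∑ Sd : Finset C, ∑ Sa : Finset C,
        Δd Sd * Δa Sa *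
          ((Finset.univ.filter (fun v : N => pref v Sa Sd ∧ ¬ pref v Sd Sa)).card : ℝ))
        = ∑ Sd : Finset C, ∑ Sa : Finset C, ∑ v : N,
            Δd Sd * Δa Sa * (if pref v Sa Sd ∧ ¬ pref v Sd Sa then (1:ℝ) else 0) :=
          Finset.sum_congr rfl fun Sd _ => Finset.sum_congr rfl fun Sa _ => hpt Sd Sa
      _ = ∑ Sd : Finset C, ∑ v : N, ∑ Sa : Finset C,
            Δd Sd * Δa Sa * (if pref v Sa Sd ∧ ¬ pref v Sd Sa then (1:ℝ) else 0) :=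
          Finset.sum_congr rfl fun Sd _ => Finset.sum_comm
      _ = ∑ v : N, ∑ Sd : Finset C, ∑ Sa : Finset C,
            Δd Sd * Δa Sa * (if pref v Sa Sd ∧ ¬ pref v Sd Sa then (1:ℝ) else 0) :=
          Finset.sum_comm
  rw [hEsum]
  have h1 : (∑ v : N, ∑ Sd : Finset C, ∑ Sa : Finset C,
      Δd Sd * Δa Sa * (if pref v Sa Sd ∧ ¬ pref v Sd Sa then (1:ℝ) else 0))
      ≤ (Fintype.card N : ℝ) * (1 / ((t : ℝ) + 1)) := by
    calc (∑ v : N, ∑ Sd : Finset C, ∑ Sa : Finset C,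
        Δd Sd * Δa Sa * (if pref v Sa Sd ∧ ¬ pref v Sd Sa then (1:ℝ) else 0))
        ≤ ∑ _v : N, 1 / ((t : ℝ) + 1) := Finset.sum_le_sum fun v _ => hQ v
      _ = (Fintype.card N : ℝ) * (1 / ((t : ℝ) + 1)) := by
          rw [Finset.sum_const, Finset.card_univ, nsmul_eq_mul]
  refine lt_of_le_of_lt h1 ?_
  have hnpos : (0:ℝ) < (Fintype.card N : ℝ) := by exact_mod_cast hn
  have hfrac : 1 / ((t : ℝ) + 1) < K' / K := by
    rw [div_lt_div_iff₀ (by positivity) hK]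
    nlinarith
  calc (Fintype.card N : ℝ) * (1 / ((t : ℝ) + 1))
      < (Fintype.card N : ℝ) * (K' / K) := by
        exact mul_lt_mul_of_pos_left hfrac hnpos
    _ = (K' / K) * (Fintype.card N : ℝ) := mul_comm _ _
end

section
/- Let V' ⊆ N be a subset of voters, K' > 0, β ∈ (0,1), and let Δ be a lottery over committees of weight at most K' that is 2-approximately stable for V'. Then for every nonempty committee S_a, the number of voters v ∈ V' with S_a ∈ G_v(Δ) is strictly less than (2/β)·(w(S_a)/K')·|V'|. -/
attribute [local instance] Classical.propDecidable

open Finset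

/-- Lemma, part 1: Let `V' ⊆ N`, `K' > 0`, `β ∈ (0,1)`, and let `Δ` be a
lottery over committees of weight at most `K'` that is `2`-approximately stable for `V'`.
Then for every nonempty committee `Sa`, the number of voters `v ∈ V'` with
`Sa ∈ G_v(Δ)` is strictly less than `(2/β)·(w(Sa)/K')·|V'|`.
(`pref v S S'` means voter `v` weakly prefers `S` to `S'`.) -/
theorem stmt_6
    {C N : Type} [Fintype C] [Fintype N] [DecidableEq C] [DecidableEq N]
    (pref : N → Finset C → Finset C → Prop)
    (htotal : ∀ v S S', pref v S S' ∨ pref v S' S)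
    (htrans : ∀ v S₁ S₂ S₃, pref v S₁ S₂ → pref v S₂ S₃ → pref v S₁ S₃)
    (hmono : ∀ v (S S' : Finset C), S ⊆ S' → pref v S' S)
    (s : C → ℝ) (hs : ∀ i, 0 < s i)
    (V' : Finset N) (K' : ℝ) (hK' : 0 < K')
    (β : ℝ) (hβ : β ∈ Set.Ioo (0 : ℝ) 1)
    (Δ : Finset C → ℝ)
    (hΔ0 : ∀ S, 0 ≤ Δ S) (hΔ1 : (∑ S : Finset C, Δ S) = 1)
    (hΔsupp : ∀ S : Finset C, Δ S ≠ 0 → (∑ i ∈ S, s i) ≤ K')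
    (hstable : ∀ S' : Finset C, S'.Nonempty →
        (∑ S : Finset C, Δ S *
            ((V'.filter (fun v : N => pref v S' S ∧ ¬ pref v S S')).card : ℝ))
          < 2 * ((∑ i ∈ S', s i) / K') * (V'.card : ℝ)) :
    ∀ Sa : Finset C, Sa.Nonempty →
      ((V'.filter (fun v : N =>
          (∑ T ∈ Finset.univ.filter (fun T : Finset C => pref v T Sa), Δ T) ≤ 1 - β)).card : ℝ)
        < (2 / β) * ((∑ i ∈ Sa, s i) / K') * (V'.card : ℝ) := by
  intro Sa hSa
  have hβ0 : 0 < β := hβ.1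
  set G := V'.filter (fun v : N =>
      (∑ T ∈ Finset.univ.filter (fun T : Finset C => pref v T Sa), Δ T) ≤ 1 - β) with hG
  -- rewrite the stable sum as a double sum
  have step : ∀ S : Finset C,
      Δ S * ((V'.filter (fun v : N => pref v Sa S ∧ ¬ pref v S Sa)).card : ℝ)
        = ∑ v ∈ V', if pref v Sa S ∧ ¬ pref v S Sa then Δ S else 0 := by
    intro S
    rw [← Finset.sum_filter, Finset.sum_const, nsmul_eq_mul, mul_comm]
  have key : β * (G.card : ℝ)
      ≤ ∑ S : Finset C, Δ S *
          ((V'.filter (fun v : N => pref v Sa S ∧ ¬ pref v S Sa)).card : ℝ) := by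
    calc β * (G.card : ℝ) = ∑ _v ∈ G, β := by rw [Finset.sum_const, nsmul_eq_mul, mul_comm]
    _ ≤ ∑ v ∈ G, ∑ S : Finset C, (if pref v Sa S ∧ ¬ pref v S Sa then Δ S else 0) := by
        apply Finset.sum_le_sum
        intro v hv
        have hv' := (Finset.mem_filter.mp hv).2
        have hiff : ∀ S : Finset C, (pref v Sa S ∧ ¬ pref v S Sa) ↔ ¬ pref v S Sa := by
          intro S
          constructor
          · exact fun h => h.2
          · intro h
            exact ⟨(htotal v S Sa).resolve_left h, h⟩
        have : (∑ S : Finset C, if pref v Sa S ∧ ¬ pref v S Sa then Δ S else 0)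
            = ∑ S ∈ Finset.univ.filter (fun S : Finset C => ¬ pref v S Sa), Δ S := by
          rw [Finset.sum_filter]
          exact Finset.sum_congr rfl (fun S _ => by simp [hiff S])
        rw [this]
        have hsplit := Finset.sum_filter_add_sum_filter_not Finset.univ
          (fun S : Finset C => pref v S Sa) Δ
        rw [hΔ1] at hsplit
        linarith
    _ ≤ ∑ v ∈ V', ∑ S : Finset C, (if pref v Sa S ∧ ¬ pref v S Sa then Δ S else 0) := by
        apply Finset.sum_le_sum_of_subset_of_nonneg (Finset.filter_subset _ _)
        intro v _ _
        exact Finset.sum_nonneg fun S _ => by split <;> simp [hΔ0 S]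
    _ = ∑ S : Finset C, Δ S *
          ((V'.filter (fun v : N => pref v Sa S ∧ ¬ pref v S Sa)).card : ℝ) := by
        rw [Finset.sum_comm]
        exact Finset.sum_congr rfl fun S _ => (step S).symm
  have hst := hstable Sa hSa
  have : β * (G.card : ℝ) < 2 * ((∑ i ∈ Sa, s i) / K') * (V'.card : ℝ) := lt_of_le_of_lt key hst
  rw [show (2 / β) * ((∑ i ∈ Sa, s i) / K') * (V'.card : ℝ)
      = (2 * ((∑ i ∈ Sa, s i) / K') * (V'.card : ℝ)) / β by ring]
  rw [lt_div_iff₀ hβ0]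
  linarith
end

section
/- Let V' ⊆ N be a subset of voters, β ∈ (0,1), and let Δ be any lottery (finitely supported probability distribution over committees). Then there exists a committee S in the support of Δ such that the number of voters v ∈ V' with S ∉ B_v(Δ) is at least (1−β)·|V'|. -/
attribute [local instance] Classical.propDecidable

open Finset

/-- In a finite nonempty set, a total transitive relation has a top element. -/
lemma exists_top_aux {α : Type*} (r : α → α → Prop) (htot : ∀ a b, r a b ∨ r b a)
    (htr : ∀ a b c, r a b → r b c → r a c) (s : Finset α) (hs : s.Nonempty) :
    ∃ a ∈ s, ∀ b ∈ s, r a b := by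
  classical
  induction s using Finset.induction_on with
  | empty => exact absurd hs (by simp)
  | @insert x s hx ih =>
    rcases s.eq_empty_or_nonempty with rfl | hs'
    · exact ⟨x, mem_insert_self _ _, fun b hb => by
        rcases mem_insert.1 hb with rfl | hb
        · exact (htot b b).elim id id
        · simp at hb⟩
    · obtain ⟨a, ha, hmax⟩ := ih hs'
      rcases htot x a with h | h
      · exact ⟨x, mem_insert_self _ _, fun b hb => by
          rcases mem_insert.1 hb with rfl | hb
          · exact (htot b b).elim id id
          · exact htr _ _ _ h (hmax b hb)⟩
      · exact ⟨a, mem_insert_of_mem ha, fun b hb => by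
          rcases mem_insert.1 hb with rfl | hb
          · exact h
          · exact hmax b hb⟩

/-- Lemma, part 2: Let `V' ⊆ N`, `β ∈ (0,1)`, and let `Δ` be any lottery
over committees. Then there exists a committee `S` in the support of `Δ` such that the
number of voters `v ∈ V'` with `S ∉ B_v(Δ)` (i.e. the `Δ`-mass of committees weakly
below `S` for `v` exceeds `β`) is at least `(1−β)·|V'|`.
(`pref v S S'` means voter `v` weakly prefers `S` to `S'`.) -/
theorem stmt_7
    {C N : Type} [Fintype C] [Fintype N] [DecidableEq C] [DecidableEq N]
    (pref : N → Finset C → Finset C → Prop)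
    (htotal : ∀ v S S', pref v S S' ∨ pref v S' S)
    (htrans : ∀ v S₁ S₂ S₃, pref v S₁ S₂ → pref v S₂ S₃ → pref v S₁ S₃)
    (V' : Finset N)
    (β : ℝ) (hβ : β ∈ Set.Ioo (0 : ℝ) 1)
    (Δ : Finset C → ℝ)
    (hΔ0 : ∀ S, 0 ≤ Δ S) (hΔ1 : (∑ S : Finset C, Δ S) = 1) :
    ∃ S : Finset C, Δ S ≠ 0 ∧
      (1 - β) * (V'.card : ℝ) ≤
        ((V'.filter (fun v : N =>
            ¬ (∑ T ∈ Finset.univ.filter (fun T : Finset C => pref v S T), Δ T) ≤ β)).card : ℝ) := by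
  classical
  set F : N → Finset C → ℝ :=
    fun v S => ∑ T ∈ Finset.univ.filter (fun T : Finset C => pref v S T), Δ T with hF
  set g : Finset C → ℝ :=
    fun S => ((V'.filter (fun v : N => ¬ F v S ≤ β)).card : ℝ) with hg
  -- Step 1: each voter has good mass at least 1 - β
  have key : ∀ v : N, 1 - β ≤ ∑ S ∈ Finset.univ.filter (fun S => ¬ F v S ≤ β), Δ S := by
    intro v
    have hsplit :
        (∑ S ∈ Finset.univ.filter (fun S => F v S ≤ β), Δ S) +
          (∑ S ∈ Finset.univ.filter (fun S => ¬ F v S ≤ β), Δ S) = 1 := by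
      rw [Finset.sum_filter_add_sum_filter_not, hΔ1]
    have hbad : (∑ S ∈ Finset.univ.filter (fun S => F v S ≤ β), Δ S) ≤ β := by
      rcases (Finset.univ.filter (fun S => F v S ≤ β)).eq_empty_or_nonempty with he | hne
      · rw [he, Finset.sum_empty]; exact le_of_lt hβ.1
      · obtain ⟨Sm, hSm, htop⟩ := exists_top_aux (pref v) (htotal v) (htrans v) _ hne
        have hsub : Finset.univ.filter (fun S => F v S ≤ β) ⊆
            Finset.univ.filter (fun T : Finset C => pref v Sm T) := by
          intro T hT
          simp only [Finset.mem_filter, Finset.mem_univ, true_and]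
          exact htop T hT
        calc (∑ S ∈ Finset.univ.filter (fun S => F v S ≤ β), Δ S)
            ≤ ∑ T ∈ Finset.univ.filter (fun T : Finset C => pref v Sm T), Δ T :=
              Finset.sum_le_sum_of_subset_of_nonneg hsub (fun T _ _ => hΔ0 T)
          _ = F v Sm := rfl
          _ ≤ β := (Finset.mem_filter.1 hSm).2
    linarith
  -- Step 2: swap sums
  have hswap : ∑ S : Finset C, Δ S * g S
      = ∑ v ∈ V', ∑ S ∈ Finset.univ.filter (fun S => ¬ F v S ≤ β), Δ S := by
    have h1 : ∀ S : Finset C, Δ S * g S = ∑ v ∈ V', if ¬ F v S ≤ β then Δ S else 0 := by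
      intro S
      rw [← Finset.sum_filter, Finset.sum_const, nsmul_eq_mul, mul_comm]
    calc ∑ S : Finset C, Δ S * g S
        = ∑ S : Finset C, ∑ v ∈ V', if ¬ F v S ≤ β then Δ S else 0 := by
          exact Finset.sum_congr rfl (fun S _ => h1 S)
      _ = ∑ v ∈ V', ∑ S : Finset C, if ¬ F v S ≤ β then Δ S else 0 := Finset.sum_comm
      _ = ∑ v ∈ V', ∑ S ∈ Finset.univ.filter (fun S => ¬ F v S ≤ β), Δ S := by
          exact Finset.sum_congr rfl (fun v _ => (Finset.sum_filter _ _).symm)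
  -- Step 3: lower bound on the average
  have hlower : (1 - β) * (V'.card : ℝ) ≤ ∑ S : Finset C, Δ S * g S := by
    rw [hswap]
    calc (1 - β) * (V'.card : ℝ) = ∑ _v ∈ V', (1 - β) := by
          rw [Finset.sum_const, nsmul_eq_mul, mul_comm]
      _ ≤ _ := Finset.sum_le_sum (fun v _ => key v)
  -- Conclude by contradiction
  by_contra hcon
  push_neg at hcon
  have hcon' : ∀ S : Finset C, Δ S ≠ 0 → g S < (1 - β) * (V'.card : ℝ) := by
    intro S h
    have := hcon S h
    simpa [hg, not_le] using this
  obtain ⟨S₀, hS₀⟩ : ∃ S : Finset C, Δ S ≠ 0 := by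
    by_contra hall
    push_neg at hall
    rw [Finset.sum_congr rfl (fun S _ => hall S)] at hΔ1
    simp at hΔ1
  have hS₀pos : 0 < Δ S₀ := lt_of_le_of_ne (hΔ0 S₀) (Ne.symm hS₀)
  have hub : ∑ S : Finset C, Δ S * g S < ∑ S : Finset C, Δ S * ((1 - β) * (V'.card : ℝ)) := by
    apply Finset.sum_lt_sum
    · intro S _
      rcases eq_or_ne (Δ S) 0 with h0 | h0
      · simp [h0]
      · exact le_of_lt (mul_lt_mul_of_pos_left (hcon' S h0)
          (lt_of_le_of_ne (hΔ0 S) (Ne.symm h0)))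
    · exact ⟨S₀, Finset.mem_univ S₀,
        mul_lt_mul_of_pos_left (hcon' S₀ hS₀) hS₀pos⟩
  rw [← Finset.sum_mul, hΔ1, one_mul] at hub
  linarith
end

section
/- In the unweighted Ranking setting, (2−ε)-approximately stable committees of integral size K may not exist for any constant ε > 0: for every ε > 0 there exist positive integers n, m, K and a Ranking instance (a strict total order >_v on the m candidates for each of the n voters) such that for every committee S ⊆ C with |S| ≤ K there exists a nonempty committee S' ⊆ C with V(S,S') ≥ (2−ε)·(|S'|/K)·n. -/
attribute [local instance] Classical.propDecidable

open Finset

/-- Lower bound: In the unweighted Ranking setting,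
`(2−ε)`-approximately stable committees may not exist, for any constant `ε > 0`.
Each voter's strict total order on candidates is encoded by an injective ranking
function `r v : Fin m → ℕ` (smaller rank = more preferred); the induced strict
preference of `v` for committee `S'` over `S` is `(S'.image (r v)).min < (S.image (r v)).min`
in `WithTop ℕ` (so the empty committee, with `min = ⊤`, is least preferred, and otherwise
committees are compared by their best-ranked member). -/
theorem stmt_11 :
    ∀ ε : ℝ, 0 < ε →
      ∃ (n m K : ℕ), 0 < n ∧ 0 < m ∧ 0 < K ∧
        ∃ r : Fin n → Fin m → ℕ,
          (∀ v, Function.Injective (r v)) ∧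
          ∀ S : Finset (Fin m), S.card ≤ K →
            ∃ S' : Finset (Fin m), S'.Nonempty ∧
              (2 - ε) * ((S'.card : ℝ) / (K : ℝ)) * (n : ℝ) ≤
                ((Finset.univ.filter (fun v : Fin n =>
                    (S'.image (r v)).min < (S.image (r v)).min)).card : ℝ) := by
  intro ε hε
  -- choose parameters
  obtain ⟨C, hC2, hεC⟩ : ∃ C : ℕ, 2 ≤ C ∧ (3 : ℝ) ≤ ε * C := by
    refine ⟨max 2 ⌈(3:ℝ)/ε⌉₊, le_max_left _ _, ?_⟩
    have h1 : (3:ℝ)/ε ≤ (⌈(3:ℝ)/ε⌉₊ : ℝ) := Nat.le_ceil _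
    have h2 : ((⌈(3:ℝ)/ε⌉₊ : ℕ) : ℝ) ≤ ((max 2 ⌈(3:ℝ)/ε⌉₊ : ℕ) : ℝ) := by
      exact_mod_cast le_max_right _ _
    have h3 : (3:ℝ)/ε ≤ ((max 2 ⌈(3:ℝ)/ε⌉₊ : ℕ) : ℝ) := h1.trans h2
    calc (3:ℝ) = ((3:ℝ)/ε) * ε := by field_simp
    _ ≤ ((max 2 ⌈(3:ℝ)/ε⌉₊ : ℕ) : ℝ) * ε := by
        apply mul_le_mul_of_nonneg_right h3 hε.le
    _ = ε * ((max 2 ⌈(3:ℝ)/ε⌉₊ : ℕ) : ℝ) := by ring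
  have hC0 : 0 < C := by omega
  set M : ℕ := 2*C^2 with hMdef
  have hM8 : 8 ≤ M := by
    have h4 : 2*2 ≤ C*C := Nat.mul_le_mul hC2 hC2
    rw [hMdef, pow_two]; omega
  set N : ℕ := C*M with hNdef
  have hN0 : 0 < N := by positivity
  haveI : NeZero N := ⟨hN0.ne'⟩
  haveI : NeZero C := ⟨hC0.ne'⟩
  -- the ranking function
  set toZ : Fin N → ZMod N := fun a => (a.val : ZMod N) with htoZdef
  set dd : Fin N → Fin N → ℕ := fun v x => (toZ x - toZ v).val with hdddef
  set r : Fin N → Fin N → ℕ := fun v x => ((dd v x + (C-1)) % C) * N + dd v x with hrdef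
  have htoZ_val : ∀ a : Fin N, (toZ a).val = a.val := fun a => ZMod.val_cast_of_lt a.isLt
  have hofZ : ∀ z : ZMod N, ((z.val : ℕ) : ZMod N) = z := fun z => ZMod.natCast_rightInverse z
  have hdd_lt : ∀ v x : Fin N, dd v x < N := fun v x => ZMod.val_lt _
  have htoZinj : Function.Injective toZ := by
    intro a b hab
    apply Fin.ext
    have := congrArg ZMod.val hab
    simpa [htoZ_val] using this
  refine ⟨N, N, 2*C-2, hN0, hN0, by omega, r, ?_, ?_⟩
  · -- injectivity
    intro v x y hxy
    have h1 : dd v x = dd v y := by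
      have e : ∀ q d : ℕ, d < N → (q * N + d) % N = d := by
        intro q d h
        rw [add_comm, Nat.add_mul_mod_self_right, Nat.mod_eq_of_lt h]
      have h := congrArg (fun z => z % N) hxy
      simp only [hrdef] at h
      rwa [e _ _ (hdd_lt v x), e _ _ (hdd_lt v y)] at h
    have h2 : toZ x - toZ v = toZ y - toZ v := by
      have := congrArg (fun t : ℕ => (t : ZMod N)) h1
      simpa [hdddef, hofZ] using this
    have h3 : toZ x = toZ y := by
      have := congrArg (fun z => z + toZ v) h2
      simpa using this
    exact htoZinj h3
  · -- main claim
    intro S hScard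
    have hdvd : C ∣ N := ⟨M, hNdef⟩
    set φ : ZMod N →+* ZMod C := ZMod.castHom hdvd (ZMod C) with hφdef
    set f : Fin N → ZMod C := fun t => φ (toZ t) with hfdef
    -- pigeonhole: some class contains at most one committee member
    have hfiber : ∃ c : ZMod C, (S.filter (fun t => f t = c)).card ≤ 1 := by
      by_contra hcon
      push_neg at hcon
      have hsum : ∑ c : ZMod C, (S.filter (fun t => f t = c)).card = S.card :=
        (Finset.card_eq_sum_card_fiberwise (fun t _ => Finset.mem_univ (f t))).symm
      have h2C : 2 * C ≤ S.card := by
        calc 2 * C = ∑ _c : ZMod C, 2 := by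
              simp [Finset.sum_const, ZMod.card C, mul_comm]
        _ ≤ ∑ c : ZMod C, (S.filter (fun t => f t = c)).card :=
              Finset.sum_le_sum (fun c _ => hcon c)
        _ = S.card := hsum
      omega
    obtain ⟨c, hc⟩ := hfiber
    -- a representative s of the class, with uniqueness in S
    obtain ⟨s, hfs, Hs⟩ : ∃ s : Fin N, f s = c ∧ ∀ t ∈ S, f t = c → t = s := by
      rcases Nat.le_one_iff_eq_zero_or_eq_one.mp hc with h0 | h1
      · have hempty : S.filter (fun t => f t = c) = ∅ := Finset.card_eq_zero.mp h0
        set z : ZMod N := ((c.val : ℕ) : ZMod N) with hzdef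
        refine ⟨⟨z.val, ZMod.val_lt z⟩, ?_, ?_⟩
        · have h1 : toZ ⟨z.val, ZMod.val_lt z⟩ = z := hofZ z
          have h2 : φ z = ((c.val : ℕ) : ZMod C) := by
            simp [hzdef, map_natCast]
          have h3 : ((c.val : ℕ) : ZMod C) = c := ZMod.natCast_rightInverse c
          simp [hfdef, h1, h2, h3]
        · intro t ht hftc
          exfalso
          have : t ∈ S.filter (fun t => f t = c) := Finset.mem_filter.mpr ⟨ht, hftc⟩
          rw [hempty] at this
          exact absurd this (Finset.notMem_empty t)
      · obtain ⟨a, ha⟩ := Finset.card_eq_one.mp h1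
        have haS : a ∈ S.filter (fun t => f t = c) := by
          rw [ha]; exact Finset.mem_singleton_self a
        refine ⟨a, (Finset.mem_filter.mp haS).2, ?_⟩
        intro t ht hftc
        have : t ∈ S.filter (fun t => f t = c) := Finset.mem_filter.mpr ⟨ht, hftc⟩
        rw [ha] at this
        exact Finset.mem_singleton.mp this
    -- the blocking candidate x = s - C
    set x : Fin N := ⟨(toZ s - ((C : ℕ) : ZMod N)).val, ZMod.val_lt _⟩ with hxdef
    have htoZx : toZ x = toZ s - ((C : ℕ) : ZMod N) := hofZ _
    refine ⟨{x}, Finset.singleton_nonempty x, ?_⟩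
    -- the fan voters
    set ψ : Fin (M-1) → Fin N :=
      fun i => ⟨(toZ s - ((C*(i.val+1)+1 : ℕ) : ZMod N)).val, ZMod.val_lt _⟩ with hψdef
    have htoZψ : ∀ i, toZ (ψ i) = toZ s - ((C*(i.val+1)+1 : ℕ) : ZMod N) := fun i => hofZ _
    have hblt : ∀ i : Fin (M-1), C*(i.val+1)+1 < N ∧ C*i.val+1 < N := by
      intro i
      have hi : i.val + 1 + 1 ≤ M := by have := i.isLt; omega
      have h1 : C*(i.val+1) + C ≤ C*M := by
        calc C*(i.val+1) + C = C*(i.val+1+1) := by ring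
        _ ≤ C*M := Nat.mul_le_mul_left C hi
      have h2 : C*i.val ≤ C*(i.val+1) := Nat.mul_le_mul_left C (by omega)
      constructor <;> (simp only [hNdef]; omega)
    -- value of dd (ψ i) s
    have hdds : ∀ i, dd (ψ i) s = C*(i.val+1)+1 := by
      intro i
      have h1 : toZ s - toZ (ψ i) = ((C*(i.val+1)+1 : ℕ) : ZMod N) := by
        rw [htoZψ]; push_cast; ring
      simp only [hdddef, h1, ZMod.val_natCast, Nat.mod_eq_of_lt (hblt i).1]
    -- value of dd (ψ i) x
    have hddx : ∀ i, dd (ψ i) x = C*i.val+1 := by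
      intro i
      have h1 : toZ x - toZ (ψ i) = ((C*i.val+1 : ℕ) : ZMod N) := by
        rw [htoZx, htoZψ]
        push_cast
        ring
      simp only [hdddef, h1, ZMod.val_natCast, Nat.mod_eq_of_lt (hblt i).2]
    -- r values
    have hrx : ∀ i, r (ψ i) x = C*i.val+1 := by
      intro i
      have h1 : C*i.val+1 + (C-1) = C*(i.val+1) := by
        have h2 : C*(i.val+1) = C*i.val + C := by ring
        omega
      simp only [hrdef, hddx, h1, Nat.mul_mod_right, Nat.zero_mul, Nat.zero_add]
    have hrs : ∀ i, r (ψ i) s = C*(i.val+1)+1 := by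
      intro i
      have h1 : C*(i.val+1)+1 + (C-1) = C*(i.val+1+1) := by
        have h2 : C*(i.val+1+1) = C*(i.val+1) + C := by ring
        omega
      simp only [hrdef, hdds, h1, Nat.mul_mod_right, Nat.zero_mul, Nat.zero_add]
    -- the class of dd modulo C detects f
    have hclass : ∀ (i : Fin (M-1)) (t : Fin N),
        ((dd (ψ i) t : ℕ) : ZMod C) = f t - f s + 1 := by
      intro i t
      have h1 : ((dd (ψ i) t : ℕ) : ZMod C) = φ (toZ t - toZ (ψ i)) := by
        simp only [hdddef]
        rw [ZMod.natCast_val, ZMod.castHom_apply]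
      rw [h1, map_sub]
      have e1 : ((C*(i.val+1)+1 : ℕ) : ZMod C) = 1 := by
        have e2 : (C*(i.val+1)+1 : ℕ) = 1 + (i.val+1)*C := by ring
        rw [e2]
        simp [Nat.cast_add, Nat.cast_mul, ZMod.natCast_self]
      have h2 : φ (toZ (ψ i)) = f s - 1 := by
        rw [htoZψ, map_sub, map_natCast φ (C*(i.val+1)+1), e1]
      rw [h2, hfdef]
      ring
    -- key comparison: for every committee member t, the blocker is better for ψ i
    have hkey : ∀ (i : Fin (M-1)) (t : Fin N), t ∈ S → r (ψ i) x < r (ψ i) t := by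
      intro i t ht
      by_cases hft : f t = f s
      · have : t = s := Hs t ht (by rw [hft, hfs])
        subst this
        rw [hrx, hrs]
        have h2 : C*(i.val+1) = C*i.val + C := by ring
        omega
      · -- t in another class: rank at least N
        have hcd : (dd (ψ i) t + (C-1)) % C ≠ 0 := by
          intro h0
          have hdvd' : (C : ℕ) ∣ (dd (ψ i) t + (C-1)) := Nat.dvd_of_mod_eq_zero h0
          have h1 : ((dd (ψ i) t + (C-1) : ℕ) : ZMod C) = 0 :=
            (ZMod.natCast_eq_zero_iff _ _).mpr hdvd'
          have h2 : ((dd (ψ i) t : ℕ) : ZMod C) = 1 := by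
            have hcast : (((C-1) : ℕ) : ZMod C) = -1 := by
              have : ((C - 1 : ℕ) : ZMod C) = ((C : ℕ) : ZMod C) - 1 := by
                have h1C : 1 ≤ C := by omega
                push_cast [Nat.cast_sub h1C]
                ring
              rw [this, ZMod.natCast_self]
              ring
            rw [Nat.cast_add, hcast] at h1
            linear_combination h1
          rw [hclass i t] at h2
          apply hft
          have : f t - f s = 0 := by linear_combination h2
          have := sub_eq_zero.mp this
          exact this
        have hge : N ≤ r (ψ i) t := by
          have h1 : 1 ≤ (dd (ψ i) t + (C-1)) % C := Nat.one_le_iff_ne_zero.mpr hcd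
          calc N = 1 * N := (one_mul N).symm
          _ ≤ ((dd (ψ i) t + (C-1)) % C) * N := Nat.mul_le_mul_right N h1
          _ ≤ r (ψ i) t := Nat.le_add_right _ _
        have hlt : r (ψ i) x < N := by
          rw [hrx]
          exact (hblt i).2
        omega
    -- each ψ i is in the filter
    have hmem : ∀ i : Fin (M-1), ψ i ∈ Finset.univ.filter (fun v : Fin N =>
        (({x} : Finset (Fin N)).image (r v)).min < (S.image (r v)).min) := by
      intro i
      rw [Finset.mem_filter]
      refine ⟨Finset.mem_univ _, ?_⟩
      rw [Finset.image_singleton, Finset.min_singleton]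
      have hle : ((r (ψ i) x + 1 : ℕ) : WithTop ℕ) ≤ (S.image (r (ψ i))).min := by
        rw [Finset.le_min_iff]
        intro b hb
        obtain ⟨t, ht, rfl⟩ := Finset.mem_image.mp hb
        exact WithTop.coe_le_coe.mpr (Nat.succ_le_of_lt (hkey i t ht))
      refine lt_of_lt_of_le ?_ hle
      exact WithTop.coe_lt_coe.mpr (Nat.lt_succ_self _)
    -- injectivity of ψ
    have hψinj : ∀ i j : Fin (M-1), ψ i = ψ j → i = j := by
      intro i j hij
      have h1 : toZ (ψ i) = toZ (ψ j) := congrArg toZ hij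
      rw [htoZψ, htoZψ] at h1
      have h2 : ((C*(i.val+1)+1 : ℕ) : ZMod N) = ((C*(j.val+1)+1 : ℕ) : ZMod N) := by
        have := congrArg (fun z => toZ s - z) h1
        simpa using this
      have h3 : C*(i.val+1)+1 = C*(j.val+1)+1 := by
        have hv := congrArg ZMod.val h2
        rwa [ZMod.val_natCast, ZMod.val_natCast, Nat.mod_eq_of_lt (hblt i).1,
          Nat.mod_eq_of_lt (hblt j).1] at hv
      have h4 : i.val + 1 = j.val + 1 := Nat.eq_of_mul_eq_mul_left hC0 (by omega)
      exact Fin.ext (by omega)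
    -- counting
    have hcount : (M-1 : ℕ) ≤ (Finset.univ.filter (fun v : Fin N =>
        (({x} : Finset (Fin N)).image (r v)).min < (S.image (r v)).min)).card := by
      calc (M-1 : ℕ) = (Finset.univ : Finset (Fin (M-1))).card := by
            simp
      _ ≤ _ := Finset.card_le_card_of_injOn ψ (fun i _ => hmem i)
            (fun i _ j _ hij => hψinj i j hij)
    -- the real inequality
    have hcardx : (({x} : Finset (Fin N)).card : ℝ) = 1 := by simp
    rw [hcardx]
    have hKcast : ((2*C-2 : ℕ) : ℝ) = 2*(C:ℝ) - 2 := by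
      have : (2:ℕ) ≤ 2*C := by omega
      push_cast [Nat.cast_sub this]
      ring
    have hNcast : ((N : ℕ) : ℝ) = (C:ℝ) * (2*(C:ℝ)^2) := by
      rw [hNdef, hMdef]
      push_cast
      ring
    have hMcast : ((M-1 : ℕ) : ℝ) = 2*(C:ℝ)^2 - 1 := by
      have : (1:ℕ) ≤ M := by omega
      rw [hMdef] at this ⊢
      push_cast [Nat.cast_sub this]
      ring
    have hCR : (2:ℝ) ≤ (C:ℝ) := by exact_mod_cast hC2
    have hKpos : (0:ℝ) < 2*(C:ℝ) - 2 := by linarith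
    have hmain : (2 - ε) * (1 / ((2*C-2 : ℕ) : ℝ)) * ((N:ℕ) : ℝ) ≤ ((M-1 : ℕ) : ℝ) := by
      rw [hKcast, hNcast, hMcast]
      rw [mul_one_div, div_mul_eq_mul_div, div_le_iff₀ hKpos]
      nlinarith [mul_le_mul_of_nonneg_left hεC (by positivity : (0:ℝ) ≤ 2*(C:ℝ)^2),
        sq_nonneg ((C:ℝ) - 1), hCR]
    calc (2 - ε) * ((1:ℝ) / ((2*C-2 : ℕ) : ℝ)) * ((N:ℕ) : ℝ) ≤ ((M-1 : ℕ) : ℝ) := hmain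
    _ ≤ _ := by exact_mod_cast hcount
end

section
/- Let t ≥ 1, let α_1,…,α_t ≥ 0 with ∑_{i=1}^t α_i = 1, let β > 0, and set p_i = min(1, α_i/(2β)) for each i. Then ∑_{i=1}^{t} α_i · ∏_{j=1}^{i} (1 − p_j) < 2β. -/
open Finset

lemma aux_prod_Iic_eq_range {t : ℕ} (f : Fin t → ℝ) (i : Fin t) :
    (∏ j ∈ Finset.Iic i, f j)
      = ∏ n ∈ Finset.range (i.1 + 1), (if h : n < t then f ⟨n, h⟩ else 1) := by
  refine Finset.prod_nbij' (fun j => (j : ℕ))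
    (fun n => if h : n < t then (⟨n, h⟩ : Fin t) else i) ?_ ?_ ?_ ?_ ?_
  · intro a ha
    simp only [Finset.mem_Iic] at ha
    simp [Nat.lt_succ_iff, Fin.le_def.mp ha]
  · intro n hn
    simp only [Finset.mem_range, Nat.lt_succ_iff] at hn
    have hnt : n < t := lt_of_le_of_lt hn i.2
    simp [hnt, Finset.mem_Iic, Fin.le_def, hn]
  · intro a ha
    simp [a.2]
  · intro n hn
    simp only [Finset.mem_range, Nat.lt_succ_iff] at hn
    have hnt : n < t := lt_of_le_of_lt hn i.2
    simp [hnt]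
  · intro a ha
    simp [a.2]

/-- For `t ≥ 1`, nonnegative `α i` summing to `1`, `β > 0`, and
`p i = min 1 (α i / (2β))`, we have `∑ i, α i · ∏_{j ≤ i} (1 − p j) < 2β`
(the product over `j = 1, …, i` includes the factor `1 − p i` itself). -/
theorem stmt_12
    (t : ℕ) (ht : 1 ≤ t)
    (α : Fin t → ℝ) (hα : ∀ i, 0 ≤ α i) (hsum : (∑ i, α i) = 1)
    (β : ℝ) (hβ : 0 < β)
    (p : Fin t → ℝ) (hp : ∀ i, p i = min 1 (α i / (2 * β))) :
    (∑ i, α i * ∏ j ∈ Finset.Iic i, (1 - p j)) < 2 * β := by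
  have hp0 : ∀ i, 0 ≤ p i := by
    intro i; rw [hp i]
    exact le_min one_pos.le (div_nonneg (hα i) (by linarith))
  have hp1 : ∀ i, p i ≤ 1 := by intro i; rw [hp i]; exact min_le_left _ _
  -- extend to ℕ
  set q : ℕ → ℝ := fun n => if h : n < t then p ⟨n, h⟩ else 0 with hq
  set P : ℕ → ℝ := fun n => ∏ k ∈ Finset.range n, (1 - q k) with hP
  have hq0 : ∀ n, 0 ≤ q n := by
    intro n; simp only [hq]; split <;> simp [hp0]
  have hq1 : ∀ n, q n ≤ 1 := by
    intro n; simp only [hq]; split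
    · exact hp1 _
    · norm_num
  have hPnn : ∀ n, 0 ≤ P n := by
    intro n
    exact Finset.prod_nonneg fun k _ => by linarith [hq1 k]
  -- rewrite the products
  have hprod : ∀ i : Fin t, (∏ j ∈ Finset.Iic i, (1 - p j)) = P (i.1 + 1) := by
    intro i
    rw [aux_prod_Iic_eq_range (fun j => 1 - p j) i]
    apply Finset.prod_congr rfl
    intro n hn
    simp only [Finset.mem_range, Nat.lt_succ_iff] at hn
    have hnt : n < t := lt_of_le_of_lt hn i.2
    simp [hq, hnt]
  have hPsucc : ∀ n, P (n + 1) = P n * (1 - q n) := by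
    intro n; simp [hP, Finset.prod_range_succ]
  -- per-term bound
  have hterm : ∀ i : Fin t, α i * P (i.1 + 1) ≤ 2 * β * (P i.1 - P (i.1 + 1)) := by
    intro i
    have hq_eq : q i.1 = p i := by simp [hq, i.2]
    have key : α i * (1 - p i) ≤ 2 * β * p i := by
      rcases min_cases (1 : ℝ) (α i / (2 * β)) with ⟨h1, h2⟩ | ⟨h1, h2⟩
      · rw [hp i, h1]; nlinarith [hp0 i]
      · have : p i = α i / (2 * β) := by rw [hp i, h1]
        rw [this]
        have h2β : (0:ℝ) < 2 * β := by linarith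
        rw [mul_div_cancel₀ _ (ne_of_gt h2β)]
        nlinarith [hp0 i, hα i, this]
    rw [hPsucc, hq_eq]
    have := hPnn i.1
    nlinarith
  -- telescoping sum
  have htel : ∑ i : Fin t, (2 * β * (P i.1 - P (i.1 + 1))) = 2 * β * (1 - P t) := by
    rw [← Finset.mul_sum]
    congr 1
    rw [Fin.sum_univ_eq_sum_range (fun n => P n - P (n + 1))]
    rw [Finset.sum_range_sub' P t]
    simp [hP]
  have hsum_le : ∑ i : Fin t, α i * P (i.1 + 1) ≤ 2 * β * (1 - P t) := by
    rw [← htel]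
    exact Finset.sum_le_sum fun i _ => hterm i
  have hgoal : (∑ i, α i * ∏ j ∈ Finset.Iic i, (1 - p j))
      = ∑ i : Fin t, α i * P (i.1 + 1) := by
    apply Finset.sum_congr rfl
    intro i _
    rw [hprod i]
  rw [hgoal]
  by_cases hcase : ∃ i : Fin t, p i = 1
  · -- some p = 1: one term is strictly smaller
    have hex : ∃ n, q n = 1 := by
      obtain ⟨i, hi⟩ := hcase
      exact ⟨i.1, by simp [hq, i.2, hi]⟩
    classical
    set n₀ := Nat.find hex with hn₀
    have hqn₀ : q n₀ = 1 := Nat.find_spec hex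
    have hn₀t : n₀ < t := by
      by_contra h
      simp [hq, h] at hqn₀
    have hPn₀ : 0 < P n₀ := by
      apply Finset.prod_pos
      intro k hk
      simp only [Finset.mem_range] at hk
      have : q k ≠ 1 := Nat.find_min hex hk
      have := hq1 k
      cases lt_or_eq_of_le this with
      | inl h => linarith
      | inr h => exact absurd h ‹q k ≠ 1›
    have hlt : ∑ i : Fin t, α i * P (i.1 + 1)
        < ∑ i : Fin t, 2 * β * (P i.1 - P (i.1 + 1)) := by
      apply Finset.sum_lt_sum (fun i _ => hterm i)
      refine ⟨⟨n₀, hn₀t⟩, Finset.mem_univ _, ?_⟩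
      have hPn₀1 : P (n₀ + 1) = 0 := by rw [hPsucc, hqn₀]; ring
      simp only [hPn₀1]
      rw [mul_zero]
      have : (0:ℝ) < 2 * β * (P n₀ - 0) := by
        rw [sub_zero]; positivity
      simpa using this
    calc ∑ i : Fin t, α i * P (i.1 + 1)
        < ∑ i : Fin t, 2 * β * (P i.1 - P (i.1 + 1)) := hlt
      _ = 2 * β * (1 - P t) := htel
      _ ≤ 2 * β := by nlinarith [hPnn t]
  · -- all p < 1: P t > 0
    push_neg at hcase
    have hPt : 0 < P t := by
      apply Finset.prod_pos
      intro k hk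
      simp only [Finset.mem_range] at hk
      have : q k < 1 := by
        simp only [hq, dif_pos hk]
        exact lt_of_le_of_ne (hp1 _) (hcase _)
      linarith
    calc ∑ i : Fin t, α i * P (i.1 + 1)
        ≤ 2 * β * (1 - P t) := hsum_le
      _ < 2 * β := by nlinarith
end

section
/- Suppose all candidates have unit weight (the weight of a committee is its cardinality). Let p ∈ (0,1), let Δ₁ be a finitely supported probability distribution over committees of size exactly 1, let Δ₂ be a finitely supported probability distribution over committees of size exactly 2, and let Δ_a = p·Δ₁ + (1−p)·Δ₂. Then there exists a finitely supported probability distribution Δ_d over committees of size at most 3 such that for every voter v, when S_d ∼ Δ_d and S_a ∼ Δ_a are drawn independently, Pr[S_a ≻_v S_d] < (2−p)/3. (Note (2−p)/3 = E_{S_a∼Δ_a}[|S_a|]/3.) -/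
attribute [local instance] Classical.propDecidable

open Finset

lemma sum_prod_one₂ {ι : Type} [Fintype ι] (w u : ι → ℝ)
    (hw1 : (∑ x : ι, w x) = 1) (hu1 : (∑ x : ι, u x) = 1) :
    (∑ t : ι, ∑ s : ι, w t * u s) = 1 := by
  have h : ∀ t : ι, (∑ s : ι, w t * u s) = w t := fun t => by
    rw [← Finset.mul_sum, hu1, mul_one]
  simp_rw [h]
  exact hw1

lemma pair_bound {ι : Type} [Fintype ι] (w : ι → ℝ) (f : ι → ι → ℝ)
    (hw : ∀ x, 0 ≤ w x) (hw1 : (∑ x : ι, w x) = 1)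
    (hf : ∀ x y, f x y + f y x ≤ 1) :
    (∑ t : ι, ∑ s : ι, w t * (w s * f s t)) ≤ 1 / 2 := by
  have hswap : (∑ t : ι, ∑ s : ι, w t * (w s * f t s))
      = ∑ t : ι, ∑ s : ι, w t * (w s * f s t) := by
    rw [Finset.sum_comm]
    exact Finset.sum_congr rfl fun t _ => Finset.sum_congr rfl fun s _ => by ring
  have hb : (∑ t : ι, ∑ s : ι, (w t * (w s * f s t) + w t * (w s * f t s))) ≤ 1 := by
    calc (∑ t : ι, ∑ s : ι, (w t * (w s * f s t) + w t * (w s * f t s)))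
        ≤ ∑ t : ι, ∑ s : ι, w t * w s := by
          refine Finset.sum_le_sum fun t _ => Finset.sum_le_sum fun s _ => ?_
          nlinarith [mul_le_mul_of_nonneg_left (hf s t) (mul_nonneg (hw t) (hw s))]
      _ = 1 := sum_prod_one₂ w w hw1 hw1
  simp_rw [Finset.sum_add_distrib] at hb
  rw [hswap] at hb
  linarith

lemma triple_bound {ι : Type} [Fintype ι] (w : ι → ℝ) (f : ι → ι → ℝ)
    (hw : ∀ x, 0 ≤ w x) (hw1 : (∑ x : ι, w x) = 1)
    (h3 : ∀ a b c, f c a * f c b + f a b * f a c + f b a * f b c ≤ 1) :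
    (∑ a : ι, ∑ b : ι, ∑ c : ι, w a * w b * w c * (f c a * f c b)) ≤ 1 / 3 := by
  have e1 : (∑ a : ι, ∑ b : ι, ∑ c : ι, w a * w b * w c * (f a b * f a c))
      = ∑ a : ι, ∑ b : ι, ∑ c : ι, w a * w b * w c * (f c a * f c b) := by
    calc (∑ a : ι, ∑ b : ι, ∑ c : ι, w a * w b * w c * (f a b * f a c))
        = ∑ b : ι, ∑ a : ι, ∑ c : ι, w a * w b * w c * (f a b * f a c) := Finset.sum_comm
      _ = ∑ b : ι, ∑ c : ι, ∑ a : ι, w a * w b * w c * (f a b * f a c) :=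
          Finset.sum_congr rfl fun b _ => Finset.sum_comm
      _ = ∑ a : ι, ∑ b : ι, ∑ c : ι, w a * w b * w c * (f c a * f c b) :=
          Finset.sum_congr rfl fun x _ => Finset.sum_congr rfl fun y _ =>
            Finset.sum_congr rfl fun z _ => by ring
  have e2 : (∑ a : ι, ∑ b : ι, ∑ c : ι, w a * w b * w c * (f b a * f b c))
      = ∑ a : ι, ∑ b : ι, ∑ c : ι, w a * w b * w c * (f c a * f c b) := by
    calc (∑ a : ι, ∑ b : ι, ∑ c : ι, w a * w b * w c * (f b a * f b c))
        = ∑ a : ι, ∑ c : ι, ∑ b : ι, w a * w b * w c * (f b a * f b c) :=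
          Finset.sum_congr rfl fun a _ => Finset.sum_comm
      _ = ∑ a : ι, ∑ b : ι, ∑ c : ι, w a * w b * w c * (f c a * f c b) :=
          Finset.sum_congr rfl fun x _ => Finset.sum_congr rfl fun y _ =>
            Finset.sum_congr rfl fun z _ => by ring
  have hcomb : (∑ a : ι, ∑ b : ι, ∑ c : ι,
      (w a * w b * w c * (f c a * f c b) + w a * w b * w c * (f a b * f a c)
        + w a * w b * w c * (f b a * f b c))) ≤ 1 := by
    calc (∑ a : ι, ∑ b : ι, ∑ c : ι,
        (w a * w b * w c * (f c a * f c b) + w a * w b * w c * (f a b * f a c)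
          + w a * w b * w c * (f b a * f b c)))
        ≤ ∑ a : ι, ∑ b : ι, ∑ c : ι, w a * w b * w c := by
          refine Finset.sum_le_sum fun a _ => Finset.sum_le_sum fun b _ =>
            Finset.sum_le_sum fun c _ => ?_
          have hx : 0 ≤ w a * w b * w c := mul_nonneg (mul_nonneg (hw a) (hw b)) (hw c)
          nlinarith [mul_le_mul_of_nonneg_left (h3 a b c) hx]
      _ = 1 := by
          have h : ∀ a b : ι, (∑ c : ι, w a * w b * w c) = w a * w b := fun a b => by
            rw [← Finset.mul_sum, hw1, mul_one]
          simp_rw [h]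
          exact sum_prod_one₂ w w hw1 hw1
  simp_rw [Finset.sum_add_distrib] at hcomb
  rw [e1, e2] at hcomb
  linarith

lemma sum_union_weight {C : Type} [Fintype C] [DecidableEq C] (w g : Finset C → ℝ) :
    (∑ T : Finset C, (∑ a : Finset C, ∑ b : Finset C, if a ∪ b = T then w a * w b else 0) * g T)
      = ∑ a : Finset C, ∑ b : Finset C, w a * w b * g (a ∪ b) := by
  simp_rw [Finset.sum_mul, ite_mul, zero_mul]
  rw [Finset.sum_comm]
  refine Finset.sum_congr rfl fun a _ => ?_
  rw [Finset.sum_comm]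
  refine Finset.sum_congr rfl fun b _ => ?_
  simp [Finset.sum_ite_eq]

/-- With unit-weight candidates, let `p ∈ (0,1)`, let `Δ₁` be a finitely
supported distribution over committees of size exactly `1`, let `Δ₂` be one over
committees of size exactly `2`, and let `Δa = p·Δ₁ + (1−p)·Δ₂`. Then there exists a
distribution `Δd` over committees of size at most `3` such that for every voter `v`,
`Pr[Sa ≻_v Sd] < (2−p)/3` when `Sd ∼ Δd` and `Sa ∼ Δa` are drawn independently.
(`pref v S S'` means voter `v` weakly prefers `S` to `S'`.) -/
theorem stmt_15
    {C N : Type} [Fintype C] [Fintype N] [DecidableEq C]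
    (pref : N → Finset C → Finset C → Prop)
    (htotal : ∀ v S S', pref v S S' ∨ pref v S' S)
    (htrans : ∀ v S₁ S₂ S₃, pref v S₁ S₂ → pref v S₂ S₃ → pref v S₁ S₃)
    (hmono : ∀ v (S S' : Finset C), S ⊆ S' → pref v S' S)
    (p : ℝ) (hp : p ∈ Set.Ioo (0 : ℝ) 1)
    (Δ₁ : Finset C → ℝ)
    (hΔ₁0 : ∀ S, 0 ≤ Δ₁ S) (hΔ₁1 : (∑ S : Finset C, Δ₁ S) = 1)
    (hΔ₁supp : ∀ S : Finset C, Δ₁ S ≠ 0 → S.card = 1)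
    (Δ₂ : Finset C → ℝ)
    (hΔ₂0 : ∀ S, 0 ≤ Δ₂ S) (hΔ₂1 : (∑ S : Finset C, Δ₂ S) = 1)
    (hΔ₂supp : ∀ S : Finset C, Δ₂ S ≠ 0 → S.card = 2)
    (Δa : Finset C → ℝ)
    (hΔa : ∀ S : Finset C, Δa S = p * Δ₁ S + (1 - p) * Δ₂ S) :
    ∃ Δd : Finset C → ℝ,
      (∀ S, 0 ≤ Δd S) ∧ (∑ S : Finset C, Δd S) = 1 ∧
      (∀ S : Finset C, Δd S ≠ 0 → S.card ≤ 3) ∧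
      ∀ v : N,
        (∑ Sd : Finset C, ∑ Sa : Finset C,
            Δd Sd * Δa Sa * (if pref v Sa Sd ∧ ¬ pref v Sd Sa then (1 : ℝ) else 0))
          < (2 - p) / 3 := by
  obtain ⟨hp0, hp1⟩ := hp
  have hq0 : (0:ℝ) < 1 - p := by linarith
  set Δd : Finset C → ℝ := fun T =>
    p * (∑ a : Finset C, ∑ b : Finset C, if a ∪ b = T then Δ₁ a * Δ₁ b else 0)
      + (1 - p) * Δ₂ T with hDd
  refine ⟨Δd, ?_, ?_, ?_, ?_⟩
  · intro S
    simp only [hDd]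
    refine add_nonneg (mul_nonneg hp0.le ?_) (mul_nonneg hq0.le (hΔ₂0 S))
    refine Finset.sum_nonneg fun a _ => Finset.sum_nonneg fun b _ => ?_
    split_ifs with h
    · exact mul_nonneg (hΔ₁0 a) (hΔ₁0 b)
    · exact le_rfl
  · simp only [hDd]
    rw [Finset.sum_add_distrib, ← Finset.mul_sum, ← Finset.mul_sum]
    have hW1 : (∑ T : Finset C, ∑ a : Finset C, ∑ b : Finset C,
        if a ∪ b = T then Δ₁ a * Δ₁ b else 0) = 1 := by
      have h := sum_union_weight Δ₁ (fun _ => (1:ℝ))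
      simp only [mul_one] at h
      rw [h]
      exact sum_prod_one₂ Δ₁ Δ₁ hΔ₁1 hΔ₁1
    rw [hW1, hΔ₂1]
    ring
  · intro T hT
    by_contra hc
    push_neg at hc
    apply hT
    simp only [hDd]
    have hW0 : (∑ a : Finset C, ∑ b : Finset C,
        if a ∪ b = T then Δ₁ a * Δ₁ b else 0) = 0 := by
      refine Finset.sum_eq_zero fun a _ => Finset.sum_eq_zero fun b _ => ?_
      split_ifs with h
      · by_cases ha : Δ₁ a = 0
        · rw [ha, zero_mul]
        · by_cases hb : Δ₁ b = 0
          · rw [hb, mul_zero]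
          · exfalso
            have h1 := hΔ₁supp a ha
            have h2 := hΔ₁supp b hb
            have h3 := Finset.card_union_le a b
            rw [h] at h3
            omega
      · rfl
    have h2 : Δ₂ T = 0 := by
      by_contra h2
      have := hΔ₂supp T h2
      omega
    rw [hW0, h2]
    ring
  · intro v
    set F : Finset C → Finset C → ℝ :=
      fun S T => if pref v S T ∧ ¬ pref v T S then (1:ℝ) else 0 with hFdef
    have hFapp : ∀ S T : Finset C,
        (if pref v S T ∧ ¬ pref v T S then (1:ℝ) else 0) = F S T := fun S T => by
      rw [hFdef]
    have hF0 : ∀ S T, 0 ≤ F S T := fun S T => by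
      simp only [hFdef]; split_ifs <;> norm_num
    have hF1 : ∀ S T, F S T ≤ 1 := fun S T => by
      simp only [hFdef]; split_ifs <;> norm_num
    have hFasym : ∀ S T, F S T + F T S ≤ 1 := fun S T => by
      simp only [hFdef]
      split_ifs <;> norm_num <;> tauto
    have hF3 : ∀ a b c : Finset C,
        F c a * F c b + F a b * F a c + F b a * F b c ≤ 1 := fun a b c => by
      simp only [hFdef]
      split_ifs <;> norm_num <;> tauto
    have hFm : ∀ S a b : Finset C, F S (a ∪ b) ≤ F S a * F S b := by
      intro S a b
      by_cases h : pref v S (a ∪ b) ∧ ¬ pref v (a ∪ b) S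
      · have h1a : pref v (a ∪ b) a := hmono v a (a ∪ b) Finset.subset_union_left
        have h1b : pref v (a ∪ b) b := hmono v b (a ∪ b) Finset.subset_union_right
        have ha1 : pref v S a := htrans v S (a ∪ b) a h.1 h1a
        have hb1 : pref v S b := htrans v S (a ∪ b) b h.1 h1b
        have hna : ¬ pref v a S := fun hcon => h.2 (htrans v (a ∪ b) a S h1a hcon)
        have hnb : ¬ pref v b S := fun hcon => h.2 (htrans v (a ∪ b) b S h1b hcon)
        simp only [hFdef]
        rw [if_pos h, if_pos ⟨ha1, hna⟩, if_pos ⟨hb1, hnb⟩]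
        norm_num
      · simp only [hFdef]
        rw [if_neg h]
        exact mul_nonneg (by split_ifs <;> norm_num) (by split_ifs <;> norm_num)
    have hFm1 : ∀ S a b : Finset C, F S (a ∪ b) ≤ F S a := by
      intro S a b
      nlinarith [hFm S a b, mul_le_mul_of_nonneg_left (hF1 S b) (hF0 S a)]
    simp only [hFapp]
    have expand : ∀ Sd Sa : Finset C, Δd Sd * Δa Sa * F Sa Sd
        = p * p * ((∑ a : Finset C, ∑ b : Finset C,
              if a ∪ b = Sd then Δ₁ a * Δ₁ b else 0) * (Δ₁ Sa * F Sa Sd))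
          + p * (1 - p) * ((∑ a : Finset C, ∑ b : Finset C,
              if a ∪ b = Sd then Δ₁ a * Δ₁ b else 0) * (Δ₂ Sa * F Sa Sd))
          + p * (1 - p) * (Δ₂ Sd * (Δ₁ Sa * F Sa Sd))
          + (1 - p) * (1 - p) * (Δ₂ Sd * (Δ₂ Sa * F Sa Sd)) := by
      intro Sd Sa
      rw [hΔa Sa]
      simp only [hDd]
      ring
    have h1 : (∑ Sd : Finset C, ∑ Sa : Finset C,
        p * p * ((∑ a : Finset C, ∑ b : Finset C,
            if a ∪ b = Sd then Δ₁ a * Δ₁ b else 0) * (Δ₁ Sa * F Sa Sd)))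
        = p * p * (∑ a : Finset C, ∑ b : Finset C, ∑ S : Finset C,
            Δ₁ a * Δ₁ b * (Δ₁ S * F S (a ∪ b))) := by
      have hc := sum_union_weight Δ₁ (fun T => ∑ S : Finset C, Δ₁ S * F S T)
      calc (∑ Sd : Finset C, ∑ Sa : Finset C,
          p * p * ((∑ a : Finset C, ∑ b : Finset C,
              if a ∪ b = Sd then Δ₁ a * Δ₁ b else 0) * (Δ₁ Sa * F Sa Sd)))
          = p * p * ∑ Sd : Finset C, ∑ Sa : Finset C,
              ((∑ a : Finset C, ∑ b : Finset C,
                if a ∪ b = Sd then Δ₁ a * Δ₁ b else 0) * (Δ₁ Sa * F Sa Sd)) := by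
            rw [Finset.mul_sum]
            exact Finset.sum_congr rfl fun Sd _ => by rw [Finset.mul_sum]
        _ = p * p * ∑ Sd : Finset C, ((∑ a : Finset C, ∑ b : Finset C,
              if a ∪ b = Sd then Δ₁ a * Δ₁ b else 0) * ∑ Sa : Finset C, Δ₁ Sa * F Sa Sd) := by
            congr 1
            exact Finset.sum_congr rfl fun Sd _ => by rw [Finset.mul_sum]
        _ = p * p * (∑ a : Finset C, ∑ b : Finset C,
              Δ₁ a * Δ₁ b * (∑ S : Finset C, Δ₁ S * F S (a ∪ b))) := by rw [hc]
        _ = p * p * (∑ a : Finset C, ∑ b : Finset C, ∑ S : Finset C,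
              Δ₁ a * Δ₁ b * (Δ₁ S * F S (a ∪ b))) := by
            congr 1
            exact Finset.sum_congr rfl fun a _ => Finset.sum_congr rfl fun b _ => by
              rw [Finset.mul_sum]
    have h2 : (∑ Sd : Finset C, ∑ Sa : Finset C,
        p * (1 - p) * ((∑ a : Finset C, ∑ b : Finset C,
            if a ∪ b = Sd then Δ₁ a * Δ₁ b else 0) * (Δ₂ Sa * F Sa Sd)))
        = p * (1 - p) * (∑ a : Finset C, ∑ b : Finset C, ∑ S : Finset C,
            Δ₁ a * Δ₁ b * (Δ₂ S * F S (a ∪ b))) := by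
      have hc := sum_union_weight Δ₁ (fun T => ∑ S : Finset C, Δ₂ S * F S T)
      calc (∑ Sd : Finset C, ∑ Sa : Finset C,
          p * (1 - p) * ((∑ a : Finset C, ∑ b : Finset C,
              if a ∪ b = Sd then Δ₁ a * Δ₁ b else 0) * (Δ₂ Sa * F Sa Sd)))
          = p * (1 - p) * ∑ Sd : Finset C, ∑ Sa : Finset C,
              ((∑ a : Finset C, ∑ b : Finset C,
                if a ∪ b = Sd then Δ₁ a * Δ₁ b else 0) * (Δ₂ Sa * F Sa Sd)) := by
            rw [Finset.mul_sum]
            exact Finset.sum_congr rfl fun Sd _ => by rw [Finset.mul_sum]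
        _ = p * (1 - p) * ∑ Sd : Finset C, ((∑ a : Finset C, ∑ b : Finset C,
              if a ∪ b = Sd then Δ₁ a * Δ₁ b else 0) * ∑ Sa : Finset C, Δ₂ Sa * F Sa Sd) := by
            congr 1
            exact Finset.sum_congr rfl fun Sd _ => by rw [Finset.mul_sum]
        _ = p * (1 - p) * (∑ a : Finset C, ∑ b : Finset C,
              Δ₁ a * Δ₁ b * (∑ S : Finset C, Δ₂ S * F S (a ∪ b))) := by rw [hc]
        _ = p * (1 - p) * (∑ a : Finset C, ∑ b : Finset C, ∑ S : Finset C,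
              Δ₁ a * Δ₁ b * (Δ₂ S * F S (a ∪ b))) := by
            congr 1
            exact Finset.sum_congr rfl fun a _ => Finset.sum_congr rfl fun b _ => by
              rw [Finset.mul_sum]
    have h3 : (∑ Sd : Finset C, ∑ Sa : Finset C,
        p * (1 - p) * (Δ₂ Sd * (Δ₁ Sa * F Sa Sd)))
        = p * (1 - p) * (∑ T : Finset C, ∑ S : Finset C, Δ₂ T * (Δ₁ S * F S T)) := by
      rw [Finset.mul_sum]
      exact Finset.sum_congr rfl fun T _ => by rw [Finset.mul_sum]
    have h4 : (∑ Sd : Finset C, ∑ Sa : Finset C,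
        (1 - p) * (1 - p) * (Δ₂ Sd * (Δ₂ Sa * F Sa Sd)))
        = (1 - p) * (1 - p) * (∑ T : Finset C, ∑ S : Finset C, Δ₂ T * (Δ₂ S * F S T)) := by
      rw [Finset.mul_sum]
      exact Finset.sum_congr rfl fun T _ => by rw [Finset.mul_sum]
    have hA : (∑ a : Finset C, ∑ b : Finset C, ∑ S : Finset C,
        Δ₁ a * Δ₁ b * (Δ₁ S * F S (a ∪ b))) ≤ 1/3 := by
      calc (∑ a : Finset C, ∑ b : Finset C, ∑ S : Finset C,
          Δ₁ a * Δ₁ b * (Δ₁ S * F S (a ∪ b)))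
          ≤ ∑ a : Finset C, ∑ b : Finset C, ∑ S : Finset C,
              Δ₁ a * Δ₁ b * Δ₁ S * (F S a * F S b) := by
            refine Finset.sum_le_sum fun a _ => Finset.sum_le_sum fun b _ =>
              Finset.sum_le_sum fun S _ => ?_
            have hx : 0 ≤ Δ₁ a * Δ₁ b * Δ₁ S :=
              mul_nonneg (mul_nonneg (hΔ₁0 a) (hΔ₁0 b)) (hΔ₁0 S)
            calc Δ₁ a * Δ₁ b * (Δ₁ S * F S (a ∪ b))
                = (Δ₁ a * Δ₁ b * Δ₁ S) * F S (a ∪ b) := by ring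
              _ ≤ (Δ₁ a * Δ₁ b * Δ₁ S) * (F S a * F S b) :=
                  mul_le_mul_of_nonneg_left (hFm S a b) hx
              _ = Δ₁ a * Δ₁ b * Δ₁ S * (F S a * F S b) := by ring
        _ ≤ 1/3 := triple_bound Δ₁ F hΔ₁0 hΔ₁1 hF3
    have hB : (∑ a : Finset C, ∑ b : Finset C, ∑ S : Finset C,
        Δ₁ a * Δ₁ b * (Δ₂ S * F S (a ∪ b)))
        ≤ (∑ a : Finset C, ∑ S : Finset C, Δ₁ a * (Δ₂ S * F S a)) := by
      calc (∑ a : Finset C, ∑ b : Finset C, ∑ S : Finset C,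
          Δ₁ a * Δ₁ b * (Δ₂ S * F S (a ∪ b)))
          ≤ ∑ a : Finset C, ∑ b : Finset C, ∑ S : Finset C,
              Δ₁ a * Δ₁ b * (Δ₂ S * F S a) := by
            refine Finset.sum_le_sum fun a _ => Finset.sum_le_sum fun b _ =>
              Finset.sum_le_sum fun S _ => ?_
            have hx : 0 ≤ Δ₁ a * Δ₁ b := mul_nonneg (hΔ₁0 a) (hΔ₁0 b)
            exact mul_le_mul_of_nonneg_left
              (mul_le_mul_of_nonneg_left (hFm1 S a b) (hΔ₂0 S)) hx
        _ = (∑ a : Finset C, ∑ S : Finset C, Δ₁ a * (Δ₂ S * F S a)) := by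
            refine Finset.sum_congr rfl fun a _ => ?_
            calc (∑ b : Finset C, ∑ S : Finset C, Δ₁ a * Δ₁ b * (Δ₂ S * F S a))
                = ∑ b : Finset C, Δ₁ b * (∑ S : Finset C, Δ₁ a * (Δ₂ S * F S a)) := by
                  refine Finset.sum_congr rfl fun b _ => ?_
                  rw [Finset.mul_sum]
                  exact Finset.sum_congr rfl fun S _ => by ring
              _ = (∑ b : Finset C, Δ₁ b) * (∑ S : Finset C, Δ₁ a * (Δ₂ S * F S a)) := by
                  rw [Finset.sum_mul]
              _ = ∑ S : Finset C, Δ₁ a * (Δ₂ S * F S a) := by rw [hΔ₁1, one_mul]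
    have hRs : (∑ T : Finset C, ∑ S : Finset C, Δ₂ T * (Δ₁ S * F S T))
        + (∑ a : Finset C, ∑ S : Finset C, Δ₁ a * (Δ₂ S * F S a)) ≤ 1 := by
      have hs' : (∑ a : Finset C, ∑ S : Finset C, Δ₁ a * (Δ₂ S * F S a))
          = ∑ T : Finset C, ∑ S : Finset C, Δ₂ T * (Δ₁ S * F T S) := by
        rw [Finset.sum_comm]
        exact Finset.sum_congr rfl fun T _ => Finset.sum_congr rfl fun S _ => by ring
      rw [hs', ← Finset.sum_add_distrib]
      simp_rw [← Finset.sum_add_distrib]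
      calc (∑ T : Finset C, ∑ S : Finset C,
          (Δ₂ T * (Δ₁ S * F S T) + Δ₂ T * (Δ₁ S * F T S)))
          ≤ ∑ T : Finset C, ∑ S : Finset C, Δ₂ T * Δ₁ S := by
            refine Finset.sum_le_sum fun T _ => Finset.sum_le_sum fun S _ => ?_
            nlinarith [mul_le_mul_of_nonneg_left (hFasym S T)
              (mul_nonneg (hΔ₂0 T) (hΔ₁0 S))]
        _ = 1 := sum_prod_one₂ Δ₂ Δ₁ hΔ₂1 hΔ₁1
    have hQ : (∑ T : Finset C, ∑ S : Finset C, Δ₂ T * (Δ₂ S * F S T)) ≤ 1/2 :=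
      pair_bound Δ₂ F hΔ₂0 hΔ₂1 hFasym
    calc (∑ Sd : Finset C, ∑ Sa : Finset C, Δd Sd * Δa Sa * F Sa Sd)
        = ∑ Sd : Finset C, ∑ Sa : Finset C,
            (p * p * ((∑ a : Finset C, ∑ b : Finset C,
                if a ∪ b = Sd then Δ₁ a * Δ₁ b else 0) * (Δ₁ Sa * F Sa Sd))
              + p * (1 - p) * ((∑ a : Finset C, ∑ b : Finset C,
                if a ∪ b = Sd then Δ₁ a * Δ₁ b else 0) * (Δ₂ Sa * F Sa Sd))
              + p * (1 - p) * (Δ₂ Sd * (Δ₁ Sa * F Sa Sd))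
              + (1 - p) * (1 - p) * (Δ₂ Sd * (Δ₂ Sa * F Sa Sd))) :=
          Finset.sum_congr rfl fun Sd _ => Finset.sum_congr rfl fun Sa _ => expand Sd Sa
      _ = (∑ Sd : Finset C, ∑ Sa : Finset C,
            p * p * ((∑ a : Finset C, ∑ b : Finset C,
                if a ∪ b = Sd then Δ₁ a * Δ₁ b else 0) * (Δ₁ Sa * F Sa Sd)))
          + (∑ Sd : Finset C, ∑ Sa : Finset C,
            p * (1 - p) * ((∑ a : Finset C, ∑ b : Finset C,
                if a ∪ b = Sd then Δ₁ a * Δ₁ b else 0) * (Δ₂ Sa * F Sa Sd)))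
          + (∑ Sd : Finset C, ∑ Sa : Finset C,
            p * (1 - p) * (Δ₂ Sd * (Δ₁ Sa * F Sa Sd)))
          + (∑ Sd : Finset C, ∑ Sa : Finset C,
            (1 - p) * (1 - p) * (Δ₂ Sd * (Δ₂ Sa * F Sa Sd))) := by
          simp_rw [Finset.sum_add_distrib]
      _ = p * p * (∑ a : Finset C, ∑ b : Finset C, ∑ S : Finset C,
              Δ₁ a * Δ₁ b * (Δ₁ S * F S (a ∪ b)))
          + p * (1 - p) * (∑ a : Finset C, ∑ b : Finset C, ∑ S : Finset C,
              Δ₁ a * Δ₁ b * (Δ₂ S * F S (a ∪ b)))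
          + p * (1 - p) * (∑ T : Finset C, ∑ S : Finset C, Δ₂ T * (Δ₁ S * F S T))
          + (1 - p) * (1 - p) * (∑ T : Finset C, ∑ S : Finset C,
              Δ₂ T * (Δ₂ S * F S T)) := by
          rw [h1, h2, h3, h4]
      _ < (2 - p) / 3 := by
          have b1 : p * p * (∑ a : Finset C, ∑ b : Finset C, ∑ S : Finset C,
              Δ₁ a * Δ₁ b * (Δ₁ S * F S (a ∪ b))) ≤ p * p * (1/3) :=
            mul_le_mul_of_nonneg_left hA (mul_self_nonneg p)
          have b2 : p * (1 - p) * (∑ a : Finset C, ∑ b : Finset C, ∑ S : Finset C,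
              Δ₁ a * Δ₁ b * (Δ₂ S * F S (a ∪ b)))
              ≤ p * (1 - p) * (∑ a : Finset C, ∑ S : Finset C, Δ₁ a * (Δ₂ S * F S a)) :=
            mul_le_mul_of_nonneg_left hB (mul_nonneg hp0.le hq0.le)
          have b3 : p * (1 - p) * (∑ T : Finset C, ∑ S : Finset C, Δ₂ T * (Δ₁ S * F S T))
              ≤ p * (1 - p) * (1 - (∑ a : Finset C, ∑ S : Finset C, Δ₁ a * (Δ₂ S * F S a))) :=
            mul_le_mul_of_nonneg_left (by linarith) (mul_nonneg hp0.le hq0.le)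
          have b4 : (1 - p) * (1 - p) * (∑ T : Finset C, ∑ S : Finset C,
              Δ₂ T * (Δ₂ S * F S T)) ≤ (1 - p) * (1 - p) * (1/2) :=
            mul_le_mul_of_nonneg_left hQ (mul_nonneg hq0.le hq0.le)
          nlinarith [mul_pos hq0 hq0]
end
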